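/- For every probability mass function π on Ω and every upper set I ⊆ Γ (with respect to ⪯_Γ), μ_π(I) − ν_π(I) = Φ_π(I^c × I) ≥ 0; in particular the benchmark sample-path law μ_π stochastically dominates the distancing sample-path law ν_π. -/

import Mathlib

open Finset Filter Topology Matrix

noncomputable section

/-- Awareness information received by node `i`: a weighted combination of the fraction of
infected social-network neighbors and the global fraction of infected nodes. -/
def infoAwareness (n : ℕ) (GI : SimpleGraph (Fin n)) [DecidableRel GI.Adj]
    (α : ℝ) (x : Fin n → ℝ) (i : Fin n) : ℝ :=
  (α / ((GI.neighborFinset i).card : ℝ)) * ∑ j ∈ GI.neighborFinset i, x j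
    + ((1 - α) / (n : ℝ)) * ∑ j, x j

/-- Social distancing action of node `i`. -/
def distAction (n : ℕ) (GI : SimpleGraph (Fin n)) [DecidableRel GI.Adj]
    (α : ℝ) (x : Fin n → ℝ) (i : Fin n) : ℝ :=
  1 - infoAwareness n GI α x i

/-- Benchmark susceptible-to-infected probability `p01_i(x)`. -/
def p01Bench (n : ℕ) (GC : SimpleGraph (Fin n)) [DecidableRel GC.Adj]
    (β : ℝ) (x : Fin n → ℝ) (i : Fin n) : ℝ :=
  1 - ∏ j ∈ GC.neighborFinset i, (1 - β * x j)

/-- Distancing susceptible-to-infected probability `p01d_i(x)`. -/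
def p01Dist (n : ℕ) (GC GI : SimpleGraph (Fin n)) [DecidableRel GC.Adj] [DecidableRel GI.Adj]
    (α β : ℝ) (x : Fin n → ℝ) (i : Fin n) : ℝ :=
  1 - ∏ j ∈ GC.neighborFinset i, (1 - β * distAction n GI α x i * x j)

/-- Distancing mean-field map `φ`. -/
def phiMap (n : ℕ) (GC GI : SimpleGraph (Fin n)) [DecidableRel GC.Adj] [DecidableRel GI.Adj]
    (α β δ : ℝ) (x : Fin n → ℝ) (i : Fin n) : ℝ :=
  (1 - δ) * x i + (1 - (1 - δ) * x i) * p01Dist n GC GI α β x i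

/-- Benchmark mean-field map `ψ`. -/
def psiMap (n : ℕ) (GC : SimpleGraph (Fin n)) [DecidableRel GC.Adj]
    (β δ : ℝ) (x : Fin n → ℝ) (i : Fin n) : ℝ :=
  (1 - δ) * x i + (1 - (1 - δ) * x i) * p01Bench n GC β x i

end

/-- A probability mass function on a countable (or arbitrary) type. -/
def IsPMF {X : Type*} (p : X → ℝ) : Prop := (∀ x, 0 ≤ p x) ∧ HasSum p 1

/-- `p` is a monotone coupling of the probability mass functions `p1` and `p2` on the
partially ordered set `X`: it is a pmf on `X × X` vanishing off `{(x,y) : x ⪯ y}` whose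
first marginal is `p1` and second marginal is `p2`. -/
def IsMonotoneCoupling {X : Type*} [PartialOrder X] (p : X × X → ℝ) (p1 p2 : X → ℝ) : Prop :=
  IsPMF p ∧ IsPMF p1 ∧ IsPMF p2 ∧
  (∀ x y : X, ¬ x ≤ y → p (x, y) = 0) ∧
  (∀ x, ∑' y, p (x, y) = p1 x) ∧
  (∀ y, ∑' x, p (x, y) = p2 y)

noncomputable section

/-- Embedding of a binary epidemic state into `[0,1]^n`. -/
def stateVec (n : ℕ) (s : Fin n → Bool) : Fin n → ℝ := fun j => if s j then 1 else 0

/-- Benchmark node-level transition probabilities `ℙ_i(s, ·)` on `{0,1}`. -/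
def nodeBench (n : ℕ) (GC : SimpleGraph (Fin n)) [DecidableRel GC.Adj] (β δ : ℝ)
    (s : Fin n → Bool) (i : Fin n) : Bool → ℝ := fun b =>
  if s i then
    (if b then 1 - δ * (1 - p01Bench n GC β (stateVec n s) i)
     else δ * (1 - p01Bench n GC β (stateVec n s) i))
  else
    (if b then p01Bench n GC β (stateVec n s) i
     else 1 - p01Bench n GC β (stateVec n s) i)

/-- Distancing node-level transition probabilities `ℙ_i^d(s, ·)` on `{0,1}`. -/
def nodeDist (n : ℕ) (GC GI : SimpleGraph (Fin n)) [DecidableRel GC.Adj] [DecidableRel GI.Adj]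
    (α β δ : ℝ) (s : Fin n → Bool) (i : Fin n) : Bool → ℝ := fun b =>
  if s i then
    (if b then 1 - δ * (1 - p01Dist n GC GI α β (stateVec n s) i)
     else δ * (1 - p01Dist n GC GI α β (stateVec n s) i))
  else
    (if b then p01Dist n GC GI α β (stateVec n s) i
     else 1 - p01Dist n GC GI α β (stateVec n s) i)

/-- Benchmark Markov transition matrix `K(s,s') = ∏ i, ℙ_i(s, s'_i)`. -/
def Kbench (n : ℕ) (GC : SimpleGraph (Fin n)) [DecidableRel GC.Adj] (β δ : ℝ)
    (s s' : Fin n → Bool) : ℝ := ∏ i, nodeBench n GC β δ s i (s' i)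

/-- Distancing Markov transition matrix `K_d(s,s') = ∏ i, ℙ_i^d(s, s'_i)`. -/
def Kdist (n : ℕ) (GC GI : SimpleGraph (Fin n)) [DecidableRel GC.Adj] [DecidableRel GI.Adj]
    (α β δ : ℝ) (s s' : Fin n → Bool) : ℝ := ∏ i, nodeDist n GC GI α β δ s i (s' i)

/-- Node-level coupling `φ_i^{x,y}` of `ℙ_i^d(x,·)` and `ℙ_i(y,·)`, for `x ⪯ y`.
(The case `x_i = 1, y_i = 0` cannot occur when `x ⪯ y`; it is assigned `0`.) -/
def nodeCouple (n : ℕ) (GC GI : SimpleGraph (Fin n)) [DecidableRel GC.Adj] [DecidableRel GI.Adj]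
    (α β δ : ℝ) (x y : Fin n → Bool) (i : Fin n) : Bool × Bool → ℝ := fun ab =>
  match x i, y i, ab.1, ab.2 with
  | true, true, false, false =>
      δ * (1 - p01Bench n GC β (stateVec n y) i)
  | true, true, false, true =>
      δ * (p01Bench n GC β (stateVec n y) i - p01Dist n GC GI α β (stateVec n x) i)
  | true, true, true, false => 0
  | true, true, true, true =>
      1 - δ * (1 - p01Dist n GC GI α β (stateVec n x) i)
  | false, false, false, false =>
      1 - p01Bench n GC β (stateVec n y) i
  | false, false, false, true =>
      p01Bench n GC β (stateVec n y) i - p01Dist n GC GI α β (stateVec n x) i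
  | false, false, true, false => 0
  | false, false, true, true =>
      p01Dist n GC GI α β (stateVec n x) i
  | false, true, false, false =>
      δ * (1 - p01Bench n GC β (stateVec n y) i)
  | false, true, false, true =>
      1 - p01Dist n GC GI α β (stateVec n x) i - δ * (1 - p01Bench n GC β (stateVec n y) i)
  | false, true, true, false => 0
  | false, true, true, true =>
      p01Dist n GC GI α β (stateVec n x) i
  | true, false, _, _ => 0

/-- State-level coupling `φ^{x,y}(ω,ω') = ∏ i, φ_i^{x,y}(ω_i, ω'_i)`. -/
def stateCouple (n : ℕ) (GC GI : SimpleGraph (Fin n)) [DecidableRel GC.Adj] [DecidableRel GI.Adj]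
    (α β δ : ℝ) (x y : Fin n → Bool) (ω ω' : Fin n → Bool) : ℝ :=
  ∏ i, nodeCouple n GC GI α β δ x y i (ω i, ω' i)

end

noncomputable section

/-- The all-susceptible state. -/
def allSusc (n : ℕ) : Fin n → Bool := fun _ => false

/-- A sample path: a trajectory of states with positive benchmark transition
probabilities that reaches the all-susceptible absorbing state in finite time. -/
def IsSamplePath (n : ℕ) (GC : SimpleGraph (Fin n)) [DecidableRel GC.Adj] (β δ : ℝ)
    (g : ℕ → Fin n → Bool) : Prop :=
  (∀ t, 0 < Kbench n GC β δ (g t) (g (t + 1))) ∧ ∃ T, g T = allSusc n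

/-- The set `Γ` of sample paths, as a subtype (partially ordered pointwise). -/
abbrev SamplePath (n : ℕ) (GC : SimpleGraph (Fin n)) [DecidableRel GC.Adj] (β δ : ℝ) :=
  {g : ℕ → Fin n → Bool // IsSamplePath n GC β δ g}

/-- Absorption time `T(g) = min {t : g^t = 0}`. -/
def absTime (n : ℕ) (GC : SimpleGraph (Fin n)) [DecidableRel GC.Adj] (β δ : ℝ)
    (g : SamplePath n GC β δ) : ℕ :=
  sInf {t | g.1 t = allSusc n}

/-- Benchmark sample-path law `μ_π(g) = π(g⁰)·∏_{t<T(g)} K(gᵗ, gᵗ⁺¹)`. -/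
def muPath (n : ℕ) (GC : SimpleGraph (Fin n)) [DecidableRel GC.Adj] (β δ : ℝ)
    (π : (Fin n → Bool) → ℝ) (g : SamplePath n GC β δ) : ℝ :=
  π (g.1 0) * ∏ t ∈ Finset.range (absTime n GC β δ g), Kbench n GC β δ (g.1 t) (g.1 (t + 1))

/-- Distancing sample-path law `ν_π(g) = π(g⁰)·∏_{t<T(g)} K_d(gᵗ, gᵗ⁺¹)`. -/
def nuPath (n : ℕ) (GC GI : SimpleGraph (Fin n)) [DecidableRel GC.Adj] [DecidableRel GI.Adj]
    (α β δ : ℝ) (π : (Fin n → Bool) → ℝ) (g : SamplePath n GC β δ) : ℝ :=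
  π (g.1 0) * ∏ t ∈ Finset.range (absTime n GC β δ g), Kdist n GC GI α β δ (g.1 t) (g.1 (t + 1))

/-- The coupling `Φ_π` on pairs of sample paths:
`Φ_π(h,g) = 1{h⁰ = g⁰}·π(h⁰)·∏_{t<T(g)} φ^{hᵗ,gᵗ}(hᵗ⁺¹, gᵗ⁺¹)`. -/
def PhiPath (n : ℕ) (GC GI : SimpleGraph (Fin n)) [DecidableRel GC.Adj] [DecidableRel GI.Adj]
    (α β δ : ℝ) (π : (Fin n → Bool) → ℝ)
    (hg : SamplePath n GC β δ × SamplePath n GC β δ) : ℝ :=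
  (if hg.1.1 0 = hg.2.1 0 then (1 : ℝ) else 0) * π (hg.1.1 0) *
    ∏ t ∈ Finset.range (absTime n GC β δ hg.2),
      stateCouple n GC GI α β δ (hg.1.1 t) (hg.2.1 t) (hg.1.1 (t + 1)) (hg.2.1 (t + 1))

end


open Finset Filter Topology

namespace SIS

variable {n : ℕ} {GC GI : SimpleGraph (Fin n)} [DecidableRel GC.Adj] [DecidableRel GI.Adj]
variable {α β δ : ℝ}

lemma stateVec_mem (s : Fin n → Bool) (j : Fin n) :
    stateVec n s j = 0 ∨ stateVec n s j = 1 := by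
  unfold stateVec; split <;> simp

lemma stateVec_nonneg (s : Fin n → Bool) (j : Fin n) : 0 ≤ stateVec n s j := by
  rcases stateVec_mem s j with h | h <;> rw [h] <;> norm_num

lemma stateVec_le_one (s : Fin n → Bool) (j : Fin n) : stateVec n s j ≤ 1 := by
  rcases stateVec_mem s j with h | h <;> rw [h] <;> norm_num

lemma stateVec_mono {x y : Fin n → Bool} (hxy : x ≤ y) (j : Fin n) :
    stateVec n x j ≤ stateVec n y j := by
  have := hxy j
  unfold stateVec
  rcases hx : x j <;> rcases hy : y j <;> simp_all [Bool.le_iff_imp]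

lemma info_mem (hn : 0 < n) (hGI : ∀ i, (GI.neighborFinset i).Nonempty)
    (hα : α ∈ Set.Icc (0:ℝ) 1) (s : Fin n → Bool) (i : Fin n) :
    infoAwareness n GI α (stateVec n s) i ∈ Set.Icc (0:ℝ) 1 := by
  obtain ⟨hα0, hα1⟩ := hα
  have hcard : (0:ℝ) < ((GI.neighborFinset i).card : ℝ) := by
    exact_mod_cast Finset.card_pos.mpr (hGI i)
  have hnpos : (0:ℝ) < (n:ℝ) := by exact_mod_cast hn
  have hs1 : (0:ℝ) ≤ ∑ j ∈ GI.neighborFinset i, stateVec n s j :=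
    Finset.sum_nonneg fun j _ => stateVec_nonneg s j
  have hs2 : ∑ j ∈ GI.neighborFinset i, stateVec n s j ≤ ((GI.neighborFinset i).card : ℝ) := by
    calc ∑ j ∈ GI.neighborFinset i, stateVec n s j ≤ ∑ j ∈ GI.neighborFinset i, 1 :=
          Finset.sum_le_sum fun j _ => stateVec_le_one s j
      _ = ((GI.neighborFinset i).card : ℝ) := by simp
  have ht1 : (0:ℝ) ≤ ∑ j, stateVec n s j := Finset.sum_nonneg fun j _ => stateVec_nonneg s j
  have ht2 : ∑ j, stateVec n s j ≤ (n:ℝ) := by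
    calc ∑ j, stateVec n s j ≤ ∑ _j : Fin n, (1:ℝ) :=
          Finset.sum_le_sum fun j _ => stateVec_le_one s j
      _ = (n:ℝ) := by simp
  constructor
  · unfold infoAwareness
    have := div_nonneg hα0 hcard.le
    have := div_nonneg (by linarith : (0:ℝ) ≤ 1 - α) hnpos.le
    positivity
  · unfold infoAwareness
    have h1 : α / ((GI.neighborFinset i).card : ℝ) * ∑ j ∈ GI.neighborFinset i, stateVec n s j
        ≤ α := by
      rw [div_mul_eq_mul_div, div_le_iff₀ hcard]
      calc α * ∑ j ∈ GI.neighborFinset i, stateVec n s j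
          ≤ α * ((GI.neighborFinset i).card : ℝ) := by
            exact mul_le_mul_of_nonneg_left hs2 hα0
        _ = α * ((GI.neighborFinset i).card : ℝ) := rfl
    have h2 : (1 - α) / (n:ℝ) * ∑ j, stateVec n s j ≤ 1 - α := by
      rw [div_mul_eq_mul_div, div_le_iff₀ hnpos]
      exact mul_le_mul_of_nonneg_left ht2 (by linarith)
    linarith

lemma distAction_mem (hn : 0 < n) (hGI : ∀ i, (GI.neighborFinset i).Nonempty)
    (hα : α ∈ Set.Icc (0:ℝ) 1) (s : Fin n → Bool) (i : Fin n) :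
    distAction n GI α (stateVec n s) i ∈ Set.Icc (0:ℝ) 1 := by
  obtain ⟨h0, h1⟩ := info_mem hn hGI hα s i
  exact ⟨by unfold distAction; linarith, by unfold distAction; linarith⟩

section bounds
variable (hβ : β ∈ Set.Ioo (0:ℝ) 1)
include hβ

lemma benchFactor_pos (s : Fin n → Bool) (j : Fin n) : 0 < 1 - β * stateVec n s j := by
  rcases stateVec_mem s j with h | h <;> rw [h] <;> [norm_num; (obtain ⟨h1, h2⟩ := hβ; nlinarith)]

lemma benchFactor_le_one (s : Fin n → Bool) (j : Fin n) : 1 - β * stateVec n s j ≤ 1 := by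
  have := stateVec_nonneg s j
  nlinarith [hβ.1]

lemma p01B_nonneg (s : Fin n → Bool) (i : Fin n) :
    0 ≤ p01Bench n GC β (stateVec n s) i := by
  unfold p01Bench
  have : ∏ j ∈ GC.neighborFinset i, (1 - β * stateVec n s j) ≤ 1 :=
    Finset.prod_le_one (fun j _ => (benchFactor_pos hβ s j).le)
      (fun j _ => benchFactor_le_one hβ s j)
  linarith

lemma p01B_lt_one (s : Fin n → Bool) (i : Fin n) :
    p01Bench n GC β (stateVec n s) i < 1 := by
  unfold p01Bench
  have : 0 < ∏ j ∈ GC.neighborFinset i, (1 - β * stateVec n s j) :=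
    Finset.prod_pos fun j _ => benchFactor_pos hβ s j
  linarith

variable (hn : 0 < n) (hGI : ∀ i, (GI.neighborFinset i).Nonempty)
    (hα : α ∈ Set.Icc (0:ℝ) 1)
include hn hGI hα

lemma distFactor_pos (s : Fin n → Bool) (i j : Fin n) :
    0 < 1 - β * distAction n GI α (stateVec n s) i * stateVec n s j := by
  obtain ⟨ha0, ha1⟩ := distAction_mem hn hGI hα s i
  rcases stateVec_mem s j with h | h <;> rw [h]
  · norm_num
  · obtain ⟨h1, h2⟩ := hβ; nlinarith

lemma distFactor_le_one (s : Fin n → Bool) (i j : Fin n) :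
    1 - β * distAction n GI α (stateVec n s) i * stateVec n s j ≤ 1 := by
  obtain ⟨ha0, ha1⟩ := distAction_mem hn hGI hα s i
  have h0 := stateVec_nonneg s j
  nlinarith [mul_nonneg (mul_nonneg hβ.1.le ha0) h0]

lemma p01D_nonneg (s : Fin n → Bool) (i : Fin n) :
    0 ≤ p01Dist n GC GI α β (stateVec n s) i := by
  unfold p01Dist
  have : ∏ j ∈ GC.neighborFinset i,
      (1 - β * distAction n GI α (stateVec n s) i * stateVec n s j) ≤ 1 :=
    Finset.prod_le_one (fun j _ => (distFactor_pos hβ hn hGI hα s i j).le)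
      (fun j _ => distFactor_le_one hβ hn hGI hα s i j)
  linarith

lemma p01D_lt_one (s : Fin n → Bool) (i : Fin n) :
    p01Dist n GC GI α β (stateVec n s) i < 1 := by
  unfold p01Dist
  have : 0 < ∏ j ∈ GC.neighborFinset i,
      (1 - β * distAction n GI α (stateVec n s) i * stateVec n s j) :=
    Finset.prod_pos fun j _ => distFactor_pos hβ hn hGI hα s i j
  linarith

lemma p01D_le_p01B {x y : Fin n → Bool} (hxy : x ≤ y) (i : Fin n) :
    p01Dist n GC GI α β (stateVec n x) i ≤ p01Bench n GC β (stateVec n y) i := by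
  unfold p01Dist p01Bench
  have : ∏ j ∈ GC.neighborFinset i, (1 - β * stateVec n y j) ≤
      ∏ j ∈ GC.neighborFinset i,
        (1 - β * distAction n GI α (stateVec n x) i * stateVec n x j) := by
    apply Finset.prod_le_prod (fun j _ => (benchFactor_pos hβ y j).le)
    intro j _
    obtain ⟨ha0, ha1⟩ := distAction_mem hn hGI hα x i
    have hx0 := stateVec_nonneg x j
    have hxyj := stateVec_mono hxy j
    have hb := hβ.1.le
    have key : β * distAction n GI α (stateVec n x) i * stateVec n x j ≤ β * stateVec n y j := by
      calc β * distAction n GI α (stateVec n x) i * stateVec n x j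
          ≤ β * 1 * stateVec n x j := by
            apply mul_le_mul_of_nonneg_right _ hx0
            exact mul_le_mul_of_nonneg_left ha1 hb
        _ = β * stateVec n x j := by ring
        _ ≤ β * stateVec n y j := mul_le_mul_of_nonneg_left hxyj hb
    linarith
  linarith

-- if p01Dist > 0 then p01Bench (same state) > 0
lemma p01B_pos_of_p01D_pos (s : Fin n → Bool) (i : Fin n)
    (h : p01Dist n GC GI α β (stateVec n s) i ≠ 0) :
    0 < p01Bench n GC β (stateVec n s) i := by
  have hD0 := p01D_nonneg hβ hn hGI hα (GC := GC) s i
  have hD : 0 < p01Dist n GC GI α β (stateVec n s) i := lt_of_le_of_ne hD0 (Ne.symm h)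
  -- some neighbor is infected
  have hprod : ∏ j ∈ GC.neighborFinset i,
      (1 - β * distAction n GI α (stateVec n s) i * stateVec n s j) < 1 := by
    unfold p01Dist at hD; linarith
  have hex : ∃ j ∈ GC.neighborFinset i, s j = true := by
    by_contra hall
    push_neg at hall
    have : ∏ j ∈ GC.neighborFinset i,
        (1 - β * distAction n GI α (stateVec n s) i * stateVec n s j) = 1 := by
      apply Finset.prod_eq_one
      intro j hj
      have : stateVec n s j = 0 := by
        unfold stateVec; simp [hall j hj]
      rw [this]; ring
    linarith
  obtain ⟨j0, hj0, hsj0⟩ := hex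
  have hfac : 1 - β * stateVec n s j0 = 1 - β := by unfold stateVec; simp [hsj0]
  have : ∏ j ∈ GC.neighborFinset i, (1 - β * stateVec n s j) ≤ 1 - β := by
    calc ∏ j ∈ GC.neighborFinset i, (1 - β * stateVec n s j)
        = (1 - β * stateVec n s j0) *
          ∏ j ∈ (GC.neighborFinset i).erase j0, (1 - β * stateVec n s j) :=
          (Finset.mul_prod_erase _ _ hj0).symm
      _ ≤ (1 - β * stateVec n s j0) * 1 := by
          apply mul_le_mul_of_nonneg_left _ (benchFactor_pos hβ s j0).le
          exact Finset.prod_le_one (fun j _ => (benchFactor_pos hβ s j).le)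
            (fun j _ => benchFactor_le_one hβ s j)
      _ = 1 - β := by rw [hfac]; ring
  unfold p01Bench
  have := hβ.1
  linarith

end bounds

end SIS

open Finset Filter Topology

namespace SIS

variable {n : ℕ} {GC GI : SimpleGraph (Fin n)} [DecidableRel GC.Adj] [DecidableRel GI.Adj]
variable {α β δ : ℝ}

lemma not_le_bool {a b : Bool} (h : ¬ a ≤ b) : a = true ∧ b = false := by
  rcases a <;> rcases b <;> simp_all [Bool.le_iff_imp]

lemma exists_bad {x y : Fin n → Bool} (h : ¬ x ≤ y) : ∃ i, x i = true ∧ y i = false := by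
  simp only [Pi.le_def, not_forall] at h
  obtain ⟨i, hi⟩ := h
  exact ⟨i, not_le_bool hi⟩

lemma nc_tf (x y : Fin n → Bool) (i : Fin n) :
    nodeCouple n GC GI α β δ x y i (true, false) = 0 := by
  unfold nodeCouple
  rcases hx : x i <;> rcases hy : y i <;> simp [hx, hy]

lemma nc_xytf {x y : Fin n → Bool} {i : Fin n} (hx : x i = true) (hy : y i = false)
    (ab : Bool × Bool) : nodeCouple n GC GI α β δ x y i ab = 0 := by
  unfold nodeCouple
  rcases ab with ⟨a, b⟩
  simp [hx, hy]

section withHyps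
variable (hn : 0 < n) (hGI : ∀ i, (GI.neighborFinset i).Nonempty)
  (hα : α ∈ Set.Icc (0:ℝ) 1) (hβ : β ∈ Set.Ioo (0:ℝ) 1) (hδ : δ ∈ Set.Ioo (0:ℝ) 1)
include hn hGI hα hβ hδ

lemma nc_nonneg {x y : Fin n → Bool} (hxy : x ≤ y) (i : Fin n) (ab : Bool × Bool) :
    0 ≤ nodeCouple n GC GI α β δ x y i ab := by
  have hB0 := p01B_nonneg (GC := GC) hβ y i
  have hB1 := p01B_lt_one (GC := GC) hβ y i
  have hD0 := p01D_nonneg (GC := GC) hβ hn hGI hα x i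
  have hD1 := p01D_lt_one (GC := GC) hβ hn hGI hα x i
  have hDB := p01D_le_p01B (GC := GC) hβ hn hGI hα hxy i
  obtain ⟨hδ0, hδ1⟩ := hδ
  have h1 : 0 ≤ δ * (1 - p01Bench n GC β (stateVec n y) i) :=
    mul_nonneg hδ0.le (by linarith)
  have h2 : 0 ≤ δ * (1 - p01Dist n GC GI α β (stateVec n x) i) :=
    mul_nonneg hδ0.le (by linarith)
  have h3 : 0 ≤ δ * (p01Bench n GC β (stateVec n y) i - p01Dist n GC GI α β (stateVec n x) i) :=
    mul_nonneg hδ0.le (by linarith)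
  have h4 : 0 ≤ (1 - δ) * (1 - p01Bench n GC β (stateVec n y) i) :=
    mul_nonneg (by linarith) (by linarith)
  have h5 : δ * (1 - p01Dist n GC GI α β (stateVec n x) i) ≤ 1 :=
    mul_le_one₀ (by linarith) (by linarith) (by linarith)
  rcases ab with ⟨a, b⟩
  unfold nodeCouple
  rcases hx : x i <;> rcases hy : y i <;> rcases a <;> rcases b <;> simp [hx, hy] <;> linarith

lemma nc_col {x y : Fin n → Bool} (hxy : x ≤ y) (i : Fin n) (b : Bool) :
    ∑ a : Bool, nodeCouple n GC GI α β δ x y i (a, b) = nodeBench n GC β δ y i b := by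
  have hxyi := hxy i
  rw [Fintype.sum_bool]
  unfold nodeCouple nodeBench
  rcases hx : x i <;> rcases hy : y i <;> rcases b <;>
    simp_all [Bool.le_iff_imp, hx, hy] <;> ring

lemma nc_row {x y : Fin n → Bool} (hxy : x ≤ y) (i : Fin n) (a : Bool) :
    ∑ b : Bool, nodeCouple n GC GI α β δ x y i (a, b) = nodeDist n GC GI α β δ x i a := by
  have hxyi := hxy i
  rw [Fintype.sum_bool]
  unfold nodeCouple nodeDist
  rcases hx : x i <;> rcases hy : y i <;> rcases a <;>
    simp_all [Bool.le_iff_imp, hx, hy] <;> ring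

lemma nc_bench_x {x y : Fin n → Bool} {i : Fin n} {ab : Bool × Bool}
    (h : nodeCouple n GC GI α β δ x y i ab ≠ 0) :
    0 < nodeBench n GC β δ x i ab.1 := by
  have hB0 := p01B_nonneg (GC := GC) hβ x i
  have hB1 := p01B_lt_one (GC := GC) hβ x i
  obtain ⟨hδ0, hδ1⟩ := hδ
  have h1 : 0 < δ * (1 - p01Bench n GC β (stateVec n x) i) :=
    mul_pos hδ0 (by linarith)
  have h5 : δ * (1 - p01Bench n GC β (stateVec n x) i) ≤ δ := by nlinarith
  rcases ab with ⟨a, b⟩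
  unfold nodeBench
  rcases hx : x i <;> rcases a <;> simp [hx]
  · linarith
  · -- x i = false, a = true : need 0 < p01Bench x i
    apply p01B_pos_of_p01D_pos hβ hn hGI hα x i
    intro hD
    apply h
    unfold nodeCouple
    rcases hy : y i <;> rcases b <;> simp [hx, hy, hD]
  · linarith
  · linarith

lemma nc_bench_y {x y : Fin n → Bool} (hxy : x ≤ y) {i : Fin n} {ab : Bool × Bool}
    (h : nodeCouple n GC GI α β δ x y i ab ≠ 0) :
    0 < nodeBench n GC β δ y i ab.2 := by
  have hB0 := p01B_nonneg (GC := GC) hβ y i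
  have hB1 := p01B_lt_one (GC := GC) hβ y i
  have hD0 := p01D_nonneg (GC := GC) hβ hn hGI hα x i
  have hDB := p01D_le_p01B (GC := GC) hβ hn hGI hα hxy i
  obtain ⟨hδ0, hδ1⟩ := hδ
  have h1 : 0 < δ * (1 - p01Bench n GC β (stateVec n y) i) :=
    mul_pos hδ0 (by linarith)
  have h5 : δ * (1 - p01Bench n GC β (stateVec n y) i) ≤ δ := by nlinarith
  rcases ab with ⟨a, b⟩
  unfold nodeBench
  rcases hy : y i <;> rcases b <;> simp [hy]
  · linarith
  · -- y i = false, b = true : need 0 < p01Bench y i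
    rcases hx : x i
    · have hne : p01Bench n GC β (stateVec n y) i ≠ 0 := by
        intro h0
        apply h
        unfold nodeCouple
        have hD00 : p01Dist n GC GI α β (stateVec n x) i = 0 := le_antisymm (by linarith) hD0
        rcases a <;> simp [hx, hy, hD00, h0]
      exact lt_of_le_of_ne hB0 (Ne.symm hne)
    · exact absurd (nc_xytf hx hy _) h
  · linarith
  · linarith

end withHyps

end SIS

open Finset Filter Topology

namespace SIS

variable {n : ℕ} {GC GI : SimpleGraph (Fin n)} [DecidableRel GC.Adj] [DecidableRel GI.Adj]
variable {α β δ : ℝ}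

section withHyps
variable (hn : 0 < n) (hGI : ∀ i, (GI.neighborFinset i).Nonempty)
  (hα : α ∈ Set.Icc (0:ℝ) 1) (hβ : β ∈ Set.Ioo (0:ℝ) 1) (hδ : δ ∈ Set.Ioo (0:ℝ) 1)

-- nodeBench basics
include hβ hδ in
lemma nodeBench_nonneg (s : Fin n → Bool) (i : Fin n) (b : Bool) :
    0 ≤ nodeBench n GC β δ s i b := by
  have hB0 := p01B_nonneg (GC := GC) hβ s i
  have hB1 := p01B_lt_one (GC := GC) hβ s i
  obtain ⟨hδ0, hδ1⟩ := hδ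
  have h1 : 0 ≤ δ * (1 - p01Bench n GC β (stateVec n s) i) := mul_nonneg hδ0.le (by linarith)
  have h5 : δ * (1 - p01Bench n GC β (stateVec n s) i) ≤ 1 :=
    mul_le_one₀ (by linarith) (by linarith) (by linarith)
  unfold nodeBench
  rcases hs : s i <;> rcases b <;> simp [hs] <;> linarith

include hβ hδ in
lemma nodeBench_false_pos (s : Fin n → Bool) (i : Fin n) :
    0 < nodeBench n GC β δ s i false := by
  have hB0 := p01B_nonneg (GC := GC) hβ s i
  have hB1 := p01B_lt_one (GC := GC) hβ s i
  obtain ⟨hδ0, hδ1⟩ := hδ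
  unfold nodeBench
  rcases hs : s i <;> simp [hs]
  · linarith
  · exact mul_pos hδ0 (by linarith)

lemma nodeBench_sum (s : Fin n → Bool) (i : Fin n) :
    ∑ b : Bool, nodeBench n GC β δ s i b = 1 := by
  rw [Fintype.sum_bool]
  unfold nodeBench
  rcases hs : s i <;> simp [hs]

include hn hGI hα hβ hδ in
lemma nodeDist_nonneg (s : Fin n → Bool) (i : Fin n) (b : Bool) :
    0 ≤ nodeDist n GC GI α β δ s i b := by
  have hD0 := p01D_nonneg (GC := GC) hβ hn hGI hα s i
  have hD1 := p01D_lt_one (GC := GC) hβ hn hGI hα s i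
  obtain ⟨hδ0, hδ1⟩ := hδ
  have h1 : 0 ≤ δ * (1 - p01Dist n GC GI α β (stateVec n s) i) := mul_nonneg hδ0.le (by linarith)
  have h5 : δ * (1 - p01Dist n GC GI α β (stateVec n s) i) ≤ 1 :=
    mul_le_one₀ (by linarith) (by linarith) (by linarith)
  unfold nodeDist
  rcases hs : s i <;> rcases b <;> simp [hs] <;> linarith

-- Kbench basics
include hβ hδ in
lemma Kbench_nonneg (s s' : Fin n → Bool) : 0 ≤ Kbench n GC β δ s s' :=
  Finset.prod_nonneg fun i _ => nodeBench_nonneg hβ hδ s i (s' i)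

include hn hGI hα hβ hδ in
lemma Kdist_nonneg (s s' : Fin n → Bool) : 0 ≤ Kdist n GC GI α β δ s s' :=
  Finset.prod_nonneg fun i _ => nodeDist_nonneg hn hGI hα hβ hδ s i (s' i)

lemma Kbench_rowsum (s : Fin n → Bool) :
    ∑ s' : Fin n → Bool, Kbench n GC β δ s s' = 1 := by
  unfold Kbench
  rw [← Fintype.piFinset_univ, ← Finset.prod_univ_sum (fun _ => (Finset.univ : Finset Bool))
    (fun i b => nodeBench n GC β δ s i b)]
  rw [Finset.prod_congr rfl fun i _ => nodeBench_sum (GC := GC) (β := β) (δ := δ) s i]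
  simp

include hβ hδ in
lemma Kbench_toZero_pos (s : Fin n → Bool) : 0 < Kbench n GC β δ s (allSusc n) :=
  Finset.prod_pos fun i _ => nodeBench_false_pos hβ hδ s i

lemma p01B_allSusc (i : Fin n) : p01Bench n GC β (stateVec n (allSusc n)) i = 0 := by
  unfold p01Bench
  have : ∀ j ∈ GC.neighborFinset i, (1 - β * stateVec n (allSusc n) j) = 1 := by
    intro j _; unfold stateVec allSusc; simp
  rw [Finset.prod_congr rfl this]
  simp

lemma p01D_allSusc (i : Fin n) : p01Dist n GC GI α β (stateVec n (allSusc n)) i = 0 := by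
  unfold p01Dist
  have : ∀ j ∈ GC.neighborFinset i,
      (1 - β * distAction n GI α (stateVec n (allSusc n)) i * stateVec n (allSusc n) j) = 1 := by
    intro j _; unfold stateVec allSusc; simp
  rw [Finset.prod_congr rfl this]
  simp

lemma Kbench_from_zero_pos {s' : Fin n → Bool} (h : Kbench n GC β δ (allSusc n) s' ≠ 0) :
    s' = allSusc n := by
  funext i
  by_contra hne
  have hall : allSusc n i = false := rfl
  have hs' : s' i = true := by
    rcases h' : s' i
    · exact absurd (h'.trans hall.symm) hne
    · rfl
  apply h
  unfold Kbench
  apply Finset.prod_eq_zero (Finset.mem_univ i)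
  unfold nodeBench
  simp [allSusc, hs', p01B_allSusc (GC := GC) (β := β) i]

-- state-level coupling lemmas
lemma sc_zero_of_not_le_out {a b : Fin n → Bool} (x y : Fin n → Bool) (h : ¬ a ≤ b) :
    stateCouple n GC GI α β δ x y a b = 0 := by
  obtain ⟨i, ha, hb⟩ := exists_bad h
  unfold stateCouple
  apply Finset.prod_eq_zero (Finset.mem_univ i)
  rw [ha, hb]
  exact nc_tf x y i

lemma sc_zero_of_not_le_in {x y : Fin n → Bool} (a b : Fin n → Bool) (h : ¬ x ≤ y) :
    stateCouple n GC GI α β δ x y a b = 0 := by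
  obtain ⟨i, hx, hy⟩ := exists_bad h
  unfold stateCouple
  apply Finset.prod_eq_zero (Finset.mem_univ i)
  exact nc_xytf hx hy _

include hn hGI hα hβ hδ in
lemma sc_nonneg (x y a b : Fin n → Bool) : 0 ≤ stateCouple n GC GI α β δ x y a b := by
  by_cases hxy : x ≤ y
  · exact Finset.prod_nonneg fun i _ => nc_nonneg hn hGI hα hβ hδ hxy i _
  · rw [sc_zero_of_not_le_in a b hxy]

include hn hGI hα hβ hδ in
lemma sc_col {x y : Fin n → Bool} (hxy : x ≤ y) (b : Fin n → Bool) :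
    ∑ a : Fin n → Bool, stateCouple n GC GI α β δ x y a b = Kbench n GC β δ y b := by
  unfold stateCouple Kbench
  rw [← Fintype.piFinset_univ, ← Finset.prod_univ_sum (fun _ => (Finset.univ : Finset Bool))
    (fun i c => nodeCouple n GC GI α β δ x y i (c, b i))]
  exact Finset.prod_congr rfl fun i _ => nc_col hn hGI hα hβ hδ hxy i (b i)

include hn hGI hα hβ hδ in
lemma sc_row {x y : Fin n → Bool} (hxy : x ≤ y) (a : Fin n → Bool) :
    ∑ b : Fin n → Bool, stateCouple n GC GI α β δ x y a b = Kdist n GC GI α β δ x a := by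
  unfold stateCouple Kdist
  rw [← Fintype.piFinset_univ, ← Finset.prod_univ_sum (fun _ => (Finset.univ : Finset Bool))
    (fun i c => nodeCouple n GC GI α β δ x y i (a i, c))]
  exact Finset.prod_congr rfl fun i _ => nc_row hn hGI hα hβ hδ hxy i (a i)

include hn hGI hα hβ hδ in
lemma sc_bench_x {x y a b : Fin n → Bool} (h : stateCouple n GC GI α β δ x y a b ≠ 0) :
    0 < Kbench n GC β δ x a := by
  unfold stateCouple at h
  rw [Finset.prod_ne_zero_iff] at h
  exact Finset.prod_pos fun i _ => nc_bench_x hn hGI hα hβ hδ (h i (Finset.mem_univ i))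

include hn hGI hα hβ hδ in
lemma sc_bench_y {x y a b : Fin n → Bool} (hxy : x ≤ y)
    (h : stateCouple n GC GI α β δ x y a b ≠ 0) : 0 < Kbench n GC β δ y b := by
  unfold stateCouple at h
  rw [Finset.prod_ne_zero_iff] at h
  exact Finset.prod_pos fun i _ => nc_bench_y hn hGI hα hβ hδ hxy (h i (Finset.mem_univ i))

lemma sc_allSusc (y b : Fin n → Bool) :
    stateCouple n GC GI α β δ (allSusc n) y (allSusc n) b = Kbench n GC β δ y b := by
  unfold stateCouple Kbench
  apply Finset.prod_congr rfl
  intro i _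
  unfold nodeCouple nodeBench
  have hx : allSusc n i = false := rfl
  rcases hy : y i <;> rcases hb : b i <;>
    simp [hx, hy, hb, p01D_allSusc (GC := GC) (GI := GI) (α := α) (β := β) i]

end withHyps

end SIS

open Finset Filter Topology

namespace SIS

variable {n : ℕ} {GC GI : SimpleGraph (Fin n)} [DecidableRel GC.Adj] [DecidableRel GI.Adj]
variable {α β δ : ℝ}

lemma absorbed_stay (g : SamplePath n GC β δ) (t : ℕ) (h : g.1 t = allSusc n) :
    g.1 (t + 1) = allSusc n := by
  apply Kbench_from_zero_pos (GC := GC) (β := β) (δ := δ)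
  have := g.2.1 t
  rw [h] at this
  exact ne_of_gt this

lemma absorbed_ge (g : SamplePath n GC β δ) {t t' : ℕ} (h : g.1 t = allSusc n)
    (htt' : t ≤ t') : g.1 t' = allSusc n := by
  induction t' , htt' using Nat.le_induction with
  | base => exact h
  | succ m hm ih => exact absorbed_stay g m ih

lemma absTime_mem (g : SamplePath n GC β δ) : g.1 (absTime n GC β δ g) = allSusc n :=
  Nat.sInf_mem g.2.2

lemma absTime_le (g : SamplePath n GC β δ) {t : ℕ} (h : g.1 t = allSusc n) :
    absTime n GC β δ g ≤ t := Nat.sInf_le h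

lemma ne_of_lt_absTime (g : SamplePath n GC β δ) {t : ℕ} (h : t < absTime n GC β δ g) :
    g.1 t ≠ allSusc n := Nat.notMem_of_lt_sInf h

lemma absorbed_of_ge (g : SamplePath n GC β δ) {t : ℕ} (h : absTime n GC β δ g ≤ t) :
    g.1 t = allSusc n := absorbed_ge g (absTime_mem g) h

lemma absTime_eq_zero_iff (g : SamplePath n GC β δ) :
    absTime n GC β δ g = 0 ↔ g.1 0 = allSusc n := by
  constructor
  · intro h; have := absTime_mem g; rwa [h] at this
  · intro h; exact Nat.le_zero.mp (absTime_le g h)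

section withHyps
variable (hβ : β ∈ Set.Ioo (0:ℝ) 1) (hδ : δ ∈ Set.Ioo (0:ℝ) 1)

def pathZero (hβ : β ∈ Set.Ioo (0:ℝ) 1) (hδ : δ ∈ Set.Ioo (0:ℝ) 1) : SamplePath n GC β δ :=
  ⟨fun _ => allSusc n, fun _ => Kbench_toZero_pos hβ hδ _, 0, rfl⟩

lemma path_eq_pathZero (g : SamplePath n GC β δ) (h : g.1 0 = allSusc n) :
    g = pathZero hβ hδ := by
  apply Subtype.ext
  funext t
  exact absorbed_ge g h (Nat.zero_le t)

lemma absTime_pathZero : absTime n GC β δ (pathZero (GC := GC) hβ hδ) = 0 :=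
  (absTime_eq_zero_iff _).mpr rfl

end withHyps

def shiftPath (g : SamplePath n GC β δ) : SamplePath n GC β δ :=
  ⟨fun t => g.1 (t + 1), fun t => g.2.1 (t + 1),
    g.2.2.choose, absorbed_stay g _ g.2.2.choose_spec⟩

lemma absTime_shift (g : SamplePath n GC β δ) (h : g.1 0 ≠ allSusc n) :
    absTime n GC β δ (shiftPath g) + 1 = absTime n GC β δ g := by
  set T := absTime n GC β δ g with hT
  have hT0 : T ≠ 0 := fun h0 => h ((absTime_eq_zero_iff g).mp h0)
  have hle : absTime n GC β δ (shiftPath g) ≤ T - 1 := by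
    apply absTime_le
    show g.1 (T - 1 + 1) = allSusc n
    have : T - 1 + 1 = T := by omega
    rw [this]
    exact absTime_mem g
  have hge : T - 1 ≤ absTime n GC β δ (shiftPath g) := by
    by_contra hlt
    push_neg at hlt
    have h1 : (shiftPath g).1 (absTime n GC β δ (shiftPath g)) = allSusc n := absTime_mem _
    have h2 : absTime n GC β δ (shiftPath g) + 1 < T := by omega
    exact ne_of_lt_absTime g h2 h1
  omega

def gluePath (y : Fin n → Bool) (g : SamplePath n GC β δ)
    (hK : 0 < Kbench n GC β δ y (g.1 0)) : SamplePath n GC β δ :=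
  ⟨fun t => match t with
    | 0 => y
    | (t' + 1) => g.1 t',
   by
    intro t
    match t with
    | 0 => exact hK
    | (t' + 1) => exact g.2.1 t',
   by
    obtain ⟨T, hT⟩ := g.2.2
    exact ⟨T + 1, hT⟩⟩

@[simp] lemma gluePath_zero (y : Fin n → Bool) (g : SamplePath n GC β δ) (hK) :
    (gluePath y g hK).1 0 = y := rfl

@[simp] lemma gluePath_succ (y : Fin n → Bool) (g : SamplePath n GC β δ) (hK) (t : ℕ) :
    (gluePath y g hK).1 (t + 1) = g.1 t := rfl

lemma shift_glue (y : Fin n → Bool) (g : SamplePath n GC β δ) (hK) :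
    shiftPath (gluePath y g hK) = g := Subtype.ext rfl

lemma glue_shift (g : SamplePath n GC β δ) (hK : 0 < Kbench n GC β δ (g.1 0) ((shiftPath g).1 0)) :
    gluePath (g.1 0) (shiftPath g) hK = g := by
  apply Subtype.ext
  funext t
  match t with
  | 0 => rfl
  | (t' + 1) => rfl

lemma absTime_glue (y : Fin n → Bool) (g : SamplePath n GC β δ) (hK) (hy : y ≠ allSusc n) :
    absTime n GC β δ (gluePath y g hK) = absTime n GC β δ g + 1 := by
  have := absTime_shift (gluePath y g hK) (by simpa using hy)
  rw [shift_glue] at this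
  omega

end SIS

open Finset Filter Topology

namespace SIS

def PT (n : ℕ) (GC : SimpleGraph (Fin n)) [DecidableRel GC.Adj] (β δ : ℝ) :
    ℕ → (Fin n → Bool) → ℝ
  | 0 => fun s => if s = allSusc n then 1 else 0
  | N + 1 => fun s => ∑ s' : Fin n → Bool, Kbench n GC β δ s s' * PT n GC β δ N s'

variable {n : ℕ} {GC GI : SimpleGraph (Fin n)} [DecidableRel GC.Adj] [DecidableRel GI.Adj]
variable {α β δ : ℝ}

lemma PT_zero (s : Fin n → Bool) : PT n GC β δ 0 s = if s = allSusc n then 1 else 0 := rfl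

lemma PT_succ (N : ℕ) (s : Fin n → Bool) :
    PT n GC β δ (N + 1) s = ∑ s' : Fin n → Bool, Kbench n GC β δ s s' * PT n GC β δ N s' := rfl

lemma Kbench_zero_zero : Kbench n GC β δ (allSusc n) (allSusc n) = 1 := by
  unfold Kbench
  apply Finset.prod_eq_one
  intro i _
  unfold nodeBench
  have : allSusc n i = false := rfl
  simp [this, p01B_allSusc (GC := GC) (β := β) i]

section withHyps
variable (hβ : β ∈ Set.Ioo (0:ℝ) 1) (hδ : δ ∈ Set.Ioo (0:ℝ) 1)
include hβ hδ

lemma PT_nonneg (N : ℕ) (s : Fin n → Bool) : 0 ≤ PT n GC β δ N s := by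
  induction N generalizing s with
  | zero => rw [PT_zero]; split <;> norm_num
  | succ N ih =>
      rw [PT_succ]
      exact Finset.sum_nonneg fun s' _ => mul_nonneg (Kbench_nonneg hβ hδ s s') (ih s')

lemma PT_le_one (N : ℕ) (s : Fin n → Bool) : PT n GC β δ N s ≤ 1 := by
  induction N generalizing s with
  | zero => rw [PT_zero]; split <;> norm_num
  | succ N ih =>
      rw [PT_succ]
      calc ∑ s' : Fin n → Bool, Kbench n GC β δ s s' * PT n GC β δ N s'
          ≤ ∑ s' : Fin n → Bool, Kbench n GC β δ s s' * 1 :=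
            Finset.sum_le_sum fun s' _ =>
              mul_le_mul_of_nonneg_left (ih s') (Kbench_nonneg hβ hδ s s')
        _ = 1 := by simpa using Kbench_rowsum (GC := GC) (β := β) (δ := δ) s

lemma PT_allSusc (N : ℕ) : PT n GC β δ N (allSusc n) = 1 := by
  induction N with
  | zero => rw [PT_zero]; simp
  | succ N ih =>
      rw [PT_succ]
      rw [Finset.sum_eq_single (allSusc n)]
      · rw [ih, Kbench_zero_zero]; ring
      · intro s' _ hs'
        have : Kbench n GC β δ (allSusc n) s' = 0 := by
          by_contra hne
          exact hs' (Kbench_from_zero_pos hne)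
        rw [this]; ring
      · intro h; exact absurd (Finset.mem_univ _) h

lemma Kbench_le_one (s s' : Fin n → Bool) : Kbench n GC β δ s s' ≤ 1 := by
  have h := Kbench_rowsum (GC := GC) (β := β) (δ := δ) s
  have := Finset.single_le_sum (f := fun s' => Kbench n GC β δ s s')
    (fun t _ => Kbench_nonneg hβ hδ s t) (Finset.mem_univ s')
  linarith

lemma PT_tendsto_one (y : Fin n → Bool) :
    Tendsto (fun N => PT n GC β δ N y) atTop (𝓝 1) := by
  -- minimum absorption probability
  obtain ⟨s0, _, hs0⟩ := Finset.exists_min_image Finset.univ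
    (fun s => Kbench n GC β δ s (allSusc n)) ⟨allSusc n, Finset.mem_univ _⟩
  set c := Kbench n GC β δ s0 (allSusc n) with hc
  have hc0 : 0 < c := Kbench_toZero_pos hβ hδ s0
  have hc1 : c ≤ 1 := Kbench_le_one hβ hδ s0 (allSusc n)
  have hcle : ∀ s, c ≤ Kbench n GC β δ s (allSusc n) := fun s => hs0 s (Finset.mem_univ s)
  have key : ∀ N s, 1 - (1 - c) ^ N ≤ PT n GC β δ N s := by
    intro N
    induction N with
    | zero => intro s; simpa using PT_nonneg hβ hδ 0 s
    | succ N ih =>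
        intro s
        have hx0 : 0 ≤ (1 - c) ^ N := pow_nonneg (by linarith) N
        have hx1 : (1 - c) ^ N ≤ 1 := pow_le_one₀ (by linarith) (by linarith)
        have hA0 := Kbench_toZero_pos hβ hδ (GC := GC) s
        have hA1 := Kbench_le_one hβ hδ (GC := GC) s (allSusc n)
        have hAc := hcle s
        have hsplit : PT n GC β δ (N+1) s
            = Kbench n GC β δ s (allSusc n) * PT n GC β δ N (allSusc n)
              + ∑ s' ∈ Finset.univ.erase (allSusc n), Kbench n GC β δ s s' * PT n GC β δ N s' := by
          rw [PT_succ]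
          rw [← Finset.add_sum_erase _ _ (Finset.mem_univ (allSusc n))]
        have herase : ∑ s' ∈ Finset.univ.erase (allSusc n), Kbench n GC β δ s s'
            = 1 - Kbench n GC β δ s (allSusc n) := by
          have := Kbench_rowsum (GC := GC) (β := β) (δ := δ) s
          rw [← Finset.add_sum_erase _ _ (Finset.mem_univ (allSusc n))] at this
          linarith
        have hbound : ∑ s' ∈ Finset.univ.erase (allSusc n),
            Kbench n GC β δ s s' * (1 - (1 - c) ^ N)
            ≤ ∑ s' ∈ Finset.univ.erase (allSusc n), Kbench n GC β δ s s' * PT n GC β δ N s' :=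
          Finset.sum_le_sum fun s' _ =>
            mul_le_mul_of_nonneg_left (ih s') (Kbench_nonneg hβ hδ s s')
        rw [← Finset.sum_mul, herase] at hbound
        rw [hsplit, PT_allSusc hβ hδ]
        have expand : (1:ℝ) - (1 - c)^(N+1) = 1 - (1-c) * (1-c)^N := by ring
        rw [expand]
        nlinarith [mul_le_mul_of_nonneg_right hAc hx0]
  have hsq1 : Tendsto (fun N => 1 - (1 - c) ^ N) atTop (𝓝 (1:ℝ)) := by
    have h1 : Tendsto (fun N => (1 - c) ^ N) atTop (𝓝 (0:ℝ)) :=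
      tendsto_pow_atTop_nhds_zero_of_lt_one (by linarith) (by linarith)
    have := h1.const_sub 1
    simpa using this
  exact tendsto_of_tendsto_of_tendsto_of_le_of_le hsq1 tendsto_const_nhds
    (fun N => key N y) (fun N => PT_le_one hβ hδ N y)

end withHyps

end SIS

open Finset Filter Topology
open scoped ENNReal NNReal

namespace SIS

noncomputable section

def WE (n : ℕ) (GC : SimpleGraph (Fin n)) [DecidableRel GC.Adj] (β δ : ℝ)
    (g : SamplePath n GC β δ) : ℝ≥0∞ :=
  ∏ t ∈ Finset.range (absTime n GC β δ g), ENNReal.ofReal (Kbench n GC β δ (g.1 t) (g.1 (t+1)))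

variable {n : ℕ} {GC GI : SimpleGraph (Fin n)} [DecidableRel GC.Adj] [DecidableRel GI.Adj]
variable {α β δ : ℝ}

lemma pos_of_ofReal_ne {r : ℝ} (h : ENNReal.ofReal r ≠ 0) : 0 < r := by
  rw [Ne, ENNReal.ofReal_eq_zero, not_le] at h
  exact h

lemma cond_of_ite_ne {c : Prop} [Decidable c] {v : ℝ≥0∞} (h : (if c then v else 0) ≠ 0) :
    c ∧ v ≠ 0 := by
  by_cases hc : c
  · exact ⟨hc, by rwa [if_pos hc] at h⟩
  · rw [if_neg hc] at h; exact absurd rfl h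

lemma WE_shift (g : SamplePath n GC β δ) (h0 : g.1 0 ≠ allSusc n) :
    WE n GC β δ g = ENNReal.ofReal (Kbench n GC β δ (g.1 0) (g.1 1))
      * WE n GC β δ (shiftPath g) := by
  unfold WE
  rw [← absTime_shift g h0, Finset.prod_range_succ']
  rw [mul_comm]
  rfl

lemma WE_glue (y : Fin n → Bool) (g : SamplePath n GC β δ) (hK) (hy : y ≠ allSusc n) :
    WE n GC β δ (gluePath y g hK)
      = ENNReal.ofReal (Kbench n GC β δ y (g.1 0)) * WE n GC β δ g := by
  rw [WE_shift (gluePath y g hK) (by simpa using hy), shift_glue]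
  rfl

section withHyps
variable (hβ : β ∈ Set.Ioo (0:ℝ) 1) (hδ : δ ∈ Set.Ioo (0:ℝ) 1)
include hβ hδ

lemma WE_pathZero : WE n GC β δ (pathZero (GC := GC) hβ hδ) = 1 := by
  unfold WE
  rw [absTime_pathZero]
  simp

lemma CN_eq (N : ℕ) (y : Fin n → Bool) :
    (∑' g : SamplePath n GC β δ,
      if g.1 0 = y ∧ absTime n GC β δ g ≤ N then WE n GC β δ g else 0)
    = ENNReal.ofReal (PT n GC β δ N y) := by
  induction N generalizing y with
  | zero =>
      by_cases hy : y = allSusc n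
      · subst hy
        rw [tsum_eq_single (pathZero (GC := GC) hβ hδ)]
        · rw [if_pos ⟨rfl, le_of_eq (absTime_pathZero hβ hδ)⟩, WE_pathZero hβ hδ, PT_zero]
          simp
        · intro g hg
          rw [if_neg]
          rintro ⟨h1, -⟩
          exact hg (path_eq_pathZero hβ hδ g h1)
      · rw [PT_zero, if_neg hy, ENNReal.ofReal_zero]
        convert tsum_zero with g
        rw [if_neg]
        rintro ⟨h1, h2⟩
        exact hy (h1 ▸ (absorbed_of_ge g h2 ▸ rfl : g.1 0 = allSusc n))
  | succ N ih =>
      by_cases hy : y = allSusc n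
      · subst hy
        rw [tsum_eq_single (pathZero (GC := GC) hβ hδ)]
        · rw [if_pos ⟨rfl, by rw [absTime_pathZero hβ hδ]; omega⟩, WE_pathZero hβ hδ,
            PT_allSusc hβ hδ]
          simp
        · intro g hg
          rw [if_neg]
          rintro ⟨h1, -⟩
          exact hg (path_eq_pathZero hβ hδ g h1)
      · -- reindex through (first step, rest of path)
        have key : (∑' g : SamplePath n GC β δ,
            if g.1 0 = y ∧ absTime n GC β δ g ≤ N + 1 then WE n GC β δ g else 0)
          = ∑' p : (Fin n → Bool) × SamplePath n GC β δ,
              (if p.2.1 0 = p.1 ∧ absTime n GC β δ p.2 ≤ N then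
                ENNReal.ofReal (Kbench n GC β δ y p.1) * WE n GC β δ p.2 else 0) := by
          apply tsum_eq_tsum_of_ne_zero_bij
            (i := fun p => gluePath y p.val.2 (by
              obtain ⟨⟨y', g'⟩, hp⟩ := p
              simp only [Function.mem_support] at hp
              obtain ⟨⟨h1, h2⟩, hv⟩ := cond_of_ite_ne hp
              have hKne : ENNReal.ofReal (Kbench n GC β δ y y') ≠ 0 := fun h0 => by
                rw [h0, zero_mul] at hv; exact hv rfl
              rw [h1]
              exact pos_of_ofReal_ne hKne))
          · -- injective
            rintro ⟨⟨y1, g1⟩, hp1⟩ ⟨⟨y2, g2⟩, hp2⟩ heq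
            simp only [Function.mem_support] at hp1 hp2
            obtain ⟨⟨h1, -⟩, -⟩ := cond_of_ite_ne hp1
            obtain ⟨⟨h2, -⟩, -⟩ := cond_of_ite_ne hp2
            simp only [Subtype.mk.injEq] at heq ⊢
            have hg : g1 = g2 := by
              have := congrArg shiftPath heq
              rwa [shift_glue, shift_glue] at this
            exact Prod.ext (by rw [← h1, ← h2, hg]) hg
          · -- support coverage
            intro g hg
            simp only [Function.mem_support] at hg
            obtain ⟨⟨h1, h2⟩, hv⟩ := cond_of_ite_ne hg
            have hy0 : g.1 0 ≠ allSusc n := by rw [h1]; exact hy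
            have hdec := WE_shift g hy0
            have hK1 : ENNReal.ofReal (Kbench n GC β δ (g.1 0) (g.1 1)) ≠ 0 := by
              intro h0; rw [hdec, h0, zero_mul] at hv; exact hv rfl
            have hK2 : WE n GC β δ (shiftPath g) ≠ 0 := by
              intro h0; rw [hdec, h0, mul_zero] at hv; exact hv rfl
            have hTsh : absTime n GC β δ (shiftPath g) + 1 = absTime n GC β δ g :=
              absTime_shift g hy0
            refine ⟨⟨⟨g.1 1, shiftPath g⟩, ?_⟩, ?_⟩
            · simp only [Function.mem_support]
              rw [if_pos ⟨rfl, by omega⟩]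
              intro h0
              rcases mul_eq_zero.mp h0 with h0 | h0
              · rw [← h1] at h0; exact hK1 h0
              · exact hK2 h0
            · show gluePath y (shiftPath g) _ = g
              have hgoal := glue_shift g (g.2.1 0)
              calc gluePath y (shiftPath g) _ = gluePath (g.1 0) (shiftPath g) (g.2.1 0) := by
                    congr 1
                    exact h1.symm
                _ = g := glue_shift g (g.2.1 0)
          · -- function values agree
            rintro ⟨⟨y', g'⟩, hp⟩
            simp only [Function.mem_support] at hp
            obtain ⟨⟨h1, h2⟩, hv⟩ := cond_of_ite_ne hp
            rw [if_pos ⟨rfl, by rw [absTime_glue y g' _ hy]; omega⟩]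
            rw [WE_glue y g' _ hy, h1]
            simp [h2]
        rw [key, ENNReal.tsum_prod']
        have hinner : ∀ y' : Fin n → Bool,
            (∑' g' : SamplePath n GC β δ,
              if g'.1 0 = y' ∧ absTime n GC β δ g' ≤ N then
                ENNReal.ofReal (Kbench n GC β δ y y') * WE n GC β δ g' else 0)
            = ENNReal.ofReal (Kbench n GC β δ y y') * ENNReal.ofReal (PT n GC β δ N y') := by
          intro y'
          rw [← ih y', ← ENNReal.tsum_mul_left]
          apply tsum_congr
          intro g'
          split_ifs <;> simp
        calc (∑' (y' : Fin n → Bool), ∑' g' : SamplePath n GC β δ,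
              if g'.1 0 = y' ∧ absTime n GC β δ g' ≤ N then
                ENNReal.ofReal (Kbench n GC β δ y y') * WE n GC β δ g' else 0)
            = ∑' y' : Fin n → Bool,
                ENNReal.ofReal (Kbench n GC β δ y y') * ENNReal.ofReal (PT n GC β δ N y') := by
              exact tsum_congr hinner
          _ = ∑ y' : Fin n → Bool,
                ENNReal.ofReal (Kbench n GC β δ y y') * ENNReal.ofReal (PT n GC β δ N y') :=
              tsum_fintype _
          _ = ENNReal.ofReal (PT n GC β δ (N+1) y) := by
              rw [PT_succ]
              rw [ENNReal.ofReal_sum_of_nonneg (fun s' _ =>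
                mul_nonneg (Kbench_nonneg hβ hδ y s') (PT_nonneg hβ hδ N s'))]
              exact Finset.sum_congr rfl fun s' _ =>
                (ENNReal.ofReal_mul (Kbench_nonneg hβ hδ y s')).symm

end withHyps

end

end SIS

open Finset Filter Topology
open scoped ENNReal NNReal

namespace SIS

noncomputable section

def shiftSeq {n : ℕ} (h : ℕ → (Fin n → Bool)) : ℕ → (Fin n → Bool) := fun t => h (t + 1)

def BE (n : ℕ) (GC GI : SimpleGraph (Fin n)) [DecidableRel GC.Adj] [DecidableRel GI.Adj]
    (α β δ : ℝ) (h : ℕ → (Fin n → Bool)) (g : SamplePath n GC β δ) : ℝ≥0∞ :=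
  ∏ t ∈ Finset.range (absTime n GC β δ g),
    ENNReal.ofReal (stateCouple n GC GI α β δ (h t) (g.1 t) (h (t+1)) (g.1 (t+1)))

def WdE (n : ℕ) (GC GI : SimpleGraph (Fin n)) [DecidableRel GC.Adj] [DecidableRel GI.Adj]
    (α β δ : ℝ) (h : SamplePath n GC β δ) : ℝ≥0∞ :=
  ∏ t ∈ Finset.range (absTime n GC β δ h),
    ENNReal.ofReal (Kdist n GC GI α β δ (h.1 t) (h.1 (t+1)))

variable {n : ℕ} {GC GI : SimpleGraph (Fin n)} [DecidableRel GC.Adj] [DecidableRel GI.Adj]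
variable {α β δ : ℝ}

lemma le_allSusc {x : Fin n → Bool} (h : x ≤ allSusc n) : x = allSusc n := by
  funext i
  have := h i
  have hfalse : allSusc n i = false := rfl
  rw [hfalse] at this
  rcases hx : x i
  · rfl
  · rw [hx] at this; exact absurd this (by simp)

lemma BE_shift (hseq : ℕ → (Fin n → Bool)) (g : SamplePath n GC β δ)
    (h0 : g.1 0 ≠ allSusc n) :
    BE n GC GI α β δ hseq g
      = ENNReal.ofReal (stateCouple n GC GI α β δ (hseq 0) (g.1 0) (hseq 1) (g.1 1))
        * BE n GC GI α β δ (shiftSeq hseq) (shiftPath g) := by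
  unfold BE
  rw [← absTime_shift g h0, Finset.prod_range_succ']
  rw [mul_comm]
  rfl

lemma BE_glue (hseq : ℕ → (Fin n → Bool)) (y : Fin n → Bool) (g' : SamplePath n GC β δ)
    (hK : 0 < Kbench n GC β δ y (g'.1 0)) (hy : y ≠ allSusc n) :
    BE n GC GI α β δ hseq (gluePath y g' hK)
      = ENNReal.ofReal (stateCouple n GC GI α β δ (hseq 0) y (hseq 1) (g'.1 0))
        * BE n GC GI α β δ (shiftSeq hseq) g' := by
  rw [BE_shift hseq (gluePath y g' hK) (by simpa using hy), shift_glue]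
  rfl

lemma WdE_shift (h : SamplePath n GC β δ) (h0 : h.1 0 ≠ allSusc n) :
    WdE n GC GI α β δ h
      = ENNReal.ofReal (Kdist n GC GI α β δ (h.1 0) (h.1 1))
        * WdE n GC GI α β δ (shiftPath h) := by
  unfold WdE
  rw [← absTime_shift h h0, Finset.prod_range_succ']
  rw [mul_comm]
  rfl

lemma BE_of_absTime_zero (hseq : ℕ → (Fin n → Bool)) (g : SamplePath n GC β δ)
    (h : absTime n GC β δ g = 0) : BE n GC GI α β δ hseq g = 1 := by
  unfold BE; rw [h]; simp

lemma shiftSeq_path (h : SamplePath n GC β δ) : (shiftPath h).1 = shiftSeq h.1 := rfl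

-- generic splitting of the reindexed sum
lemma split_sum (F : (Fin n → Bool) → ℝ≥0∞) (D : SamplePath n GC β δ → ℝ≥0∞) :
    (∑' p : (Fin n → Bool) × SamplePath n GC β δ,
      if p.2.1 0 = p.1 then F p.1 * D p.2 else 0)
    = ∑ y' : Fin n → Bool, F y' * (∑' g' : SamplePath n GC β δ,
        if g'.1 0 = y' then D g' else 0) := by
  rw [ENNReal.tsum_prod', ← tsum_fintype (L := SummationFilter.unconditional _)]
  apply tsum_congr
  intro y'
  rw [← ENNReal.tsum_mul_left]
  apply tsum_congr
  intro g'
  split_ifs <;> simp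

section withHyps
variable (hn : 0 < n) (hGI : ∀ i, (GI.neighborFinset i).Nonempty)
  (hα : α ∈ Set.Icc (0:ℝ) 1) (hβ : β ∈ Set.Ioo (0:ℝ) 1) (hδ : δ ∈ Set.Ioo (0:ℝ) 1)

include hβ hδ in
lemma tsum_WE (y : Fin n → Bool) :
    (∑' g : SamplePath n GC β δ, if g.1 0 = y then WE n GC β δ g else 0) = 1 := by
  apply le_antisymm
  · rw [ENNReal.tsum_eq_iSup_sum]
    apply iSup_le
    intro s
    set N := s.sup (absTime n GC β δ) with hN
    calc ∑ g ∈ s, (if g.1 0 = y then WE n GC β δ g else 0)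
        ≤ ∑ g ∈ s, (if g.1 0 = y ∧ absTime n GC β δ g ≤ N then WE n GC β δ g else 0) := by
          apply Finset.sum_le_sum
          intro g hg
          have hTg : absTime n GC β δ g ≤ N := Finset.le_sup hg
          split_ifs with h1 h2
          · exact le_refl _
          · exact absurd ⟨h1, hTg⟩ h2
          · exact zero_le
          · exact le_refl _
      _ ≤ ∑' g : SamplePath n GC β δ,
            (if g.1 0 = y ∧ absTime n GC β δ g ≤ N then WE n GC β δ g else 0) :=
          ENNReal.sum_le_tsum s
      _ = ENNReal.ofReal (PT n GC β δ N y) := CN_eq hβ hδ N y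
      _ ≤ 1 := ENNReal.ofReal_le_one.mpr (PT_le_one hβ hδ N y)
  · have hmono : ∀ N : ℕ, ENNReal.ofReal (PT n GC β δ N y)
        ≤ ∑' g : SamplePath n GC β δ, (if g.1 0 = y then WE n GC β δ g else 0) := by
      intro N
      rw [← CN_eq hβ hδ N y]
      apply ENNReal.tsum_le_tsum
      intro g
      split_ifs with h1 h2
      · exact le_refl _
      · exact absurd h1.1 h2
      · exact zero_le
      · exact le_refl _
    have htend : Tendsto (fun N => ENNReal.ofReal (PT n GC β δ N y)) atTop
        (𝓝 (ENNReal.ofReal 1)) := ENNReal.tendsto_ofReal (PT_tendsto_one hβ hδ y)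
    rw [ENNReal.ofReal_one] at htend
    exact le_of_tendsto htend (Filter.Eventually.of_forall hmono)

include hn hGI hα hβ hδ in
lemma claimA : ∀ (N : ℕ) (g : SamplePath n GC β δ), absTime n GC β δ g = N →
    ∀ (x : Fin n → Bool), x ≤ g.1 0 →
    (∑' h : SamplePath n GC β δ,
      if h.1 0 = x then BE n GC GI α β δ h.1 g else 0) = WE n GC β δ g := by
  intro N
  induction N with
  | zero =>
      intro g hg x hx
      have hg0 : g.1 0 = allSusc n := (absTime_eq_zero_iff g).mp hg
      have hxz : x = allSusc n := le_allSusc (hg0 ▸ hx)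
      subst hxz
      rw [tsum_eq_single (pathZero (GC := GC) hβ hδ)]
      · rw [if_pos (show (pathZero (GC := GC) hβ hδ).1 0 = allSusc n from rfl),
          BE_of_absTime_zero _ _ hg]
        unfold WE
        rw [hg]
        simp
      · intro h hne
        rw [if_neg]
        intro h0
        exact hne (path_eq_pathZero hβ hδ h h0)
  | succ N ih =>
      intro g hg x hx
      have hg0 : g.1 0 ≠ allSusc n := by
        intro h0
        rw [(absTime_eq_zero_iff g).mpr h0] at hg
        omega
      have hTsh : absTime n GC β δ (shiftPath g) = N := by
        have := absTime_shift g hg0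
        omega
      have hAf : ∀ (h' : SamplePath n GC β δ) (hK : 0 < Kbench n GC β δ x (h'.1 0)),
          BE n GC GI α β δ (gluePath x h' hK).1 g
            = ENNReal.ofReal (stateCouple n GC GI α β δ x (g.1 0) (h'.1 0) (g.1 1))
              * BE n GC GI α β δ h'.1 (shiftPath g) := by
        intro h' hK
        rw [BE_shift _ g hg0]
        rfl
      have key : (∑' h : SamplePath n GC β δ,
          if h.1 0 = x then BE n GC GI α β δ h.1 g else 0)
        = ∑' p : (Fin n → Bool) × SamplePath n GC β δ,
            (if p.2.1 0 = p.1 then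
              ENNReal.ofReal (stateCouple n GC GI α β δ x (g.1 0) p.1 (g.1 1))
                * BE n GC GI α β δ p.2.1 (shiftPath g) else 0) := by
        apply tsum_eq_tsum_of_ne_zero_bij
          (i := fun p => gluePath x p.val.2 (by
            obtain ⟨⟨x', h'⟩, hp⟩ := p
            simp only [Function.mem_support] at hp
            obtain ⟨h1, hv⟩ := cond_of_ite_ne hp
            have hsc : stateCouple n GC GI α β δ x (g.1 0) x' (g.1 1) ≠ 0 := by
              intro h0
              rw [h0, ENNReal.ofReal_zero, zero_mul] at hv
              exact hv rfl
            have := sc_bench_x hn hGI hα hβ hδ hsc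
            rw [h1]
            exact this))
        · -- injective
          rintro ⟨⟨x1, h1'⟩, hp1⟩ ⟨⟨x2, h2'⟩, hp2⟩ heq
          simp only [Function.mem_support] at hp1 hp2
          obtain ⟨hc1, -⟩ := cond_of_ite_ne hp1
          obtain ⟨hc2, -⟩ := cond_of_ite_ne hp2
          simp only [Subtype.mk.injEq] at heq ⊢
          have hh : h1' = h2' := by
            have := congrArg shiftPath heq
            rwa [shift_glue, shift_glue] at this
          exact Prod.ext (by rw [← hc1, ← hc2, hh]) hh
        · -- coverage
          intro h hne
          simp only [Function.mem_support] at hne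
          obtain ⟨h1, hv⟩ := cond_of_ite_ne hne
          have hdec := BE_shift (GI := GI) (α := α) h.1 g hg0
          rw [h1] at hdec
          have hsc : ENNReal.ofReal
              (stateCouple n GC GI α β δ x (g.1 0) (h.1 1) (g.1 1)) ≠ 0 := by
            intro h0
            rw [hdec, h0, zero_mul] at hv
            exact hv rfl
          have hbe : BE n GC GI α β δ (shiftSeq h.1) (shiftPath g) ≠ 0 := by
            intro h0
            rw [hdec, h0, mul_zero] at hv
            exact hv rfl
          refine ⟨⟨⟨h.1 1, shiftPath h⟩, ?_⟩, ?_⟩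
          · simp only [Function.mem_support]
            rw [if_pos (show (shiftPath h).1 0 = h.1 1 from rfl)]
            intro h0
            rcases mul_eq_zero.mp h0 with h0 | h0
            · exact hsc h0
            · rw [shiftSeq_path] at h0
              exact hbe h0
          · show gluePath x (shiftPath h) _ = h
            calc gluePath x (shiftPath h) _
                = gluePath (h.1 0) (shiftPath h) (h.2.1 0) := by congr 1; exact h1.symm
              _ = h := glue_shift h (h.2.1 0)
        · -- values agree
          rintro ⟨⟨x', h'⟩, hp⟩
          simp only [Function.mem_support] at hp
          obtain ⟨h1, hv⟩ := cond_of_ite_ne hp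
          rw [if_pos h1, if_pos (gluePath_zero x h' _), hAf h' _, h1]
      rw [key, split_sum
        (fun x' => ENNReal.ofReal (stateCouple n GC GI α β δ x (g.1 0) x' (g.1 1)))
        (fun h' => BE n GC GI α β δ h'.1 (shiftPath g))]
      have hstep : ∀ x' : Fin n → Bool,
          ENNReal.ofReal (stateCouple n GC GI α β δ x (g.1 0) x' (g.1 1))
            * (∑' h' : SamplePath n GC β δ,
                if h'.1 0 = x' then BE n GC GI α β δ h'.1 (shiftPath g) else 0)
          = ENNReal.ofReal (stateCouple n GC GI α β δ x (g.1 0) x' (g.1 1))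
            * WE n GC β δ (shiftPath g) := by
        intro x'
        by_cases hle : x' ≤ (shiftPath g).1 0
        · rw [ih (shiftPath g) hTsh x' hle]
        · have : stateCouple n GC GI α β δ x (g.1 0) x' (g.1 1) = 0 :=
            sc_zero_of_not_le_out x (g.1 0) hle
          rw [this, ENNReal.ofReal_zero, zero_mul, zero_mul]
      rw [Finset.sum_congr rfl fun x' _ => hstep x']
      rw [← Finset.sum_mul]
      rw [← ENNReal.ofReal_sum_of_nonneg
        (fun x' _ => sc_nonneg hn hGI hα hβ hδ x (g.1 0) x' (g.1 1))]
      rw [sc_col hn hGI hα hβ hδ hx (g.1 1)]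
      exact (WE_shift g hg0).symm

include hn hGI hα hβ hδ in
lemma claimB : ∀ (N : ℕ) (h : SamplePath n GC β δ), absTime n GC β δ h = N →
    ∀ (y : Fin n → Bool), h.1 0 ≤ y →
    (∑' g : SamplePath n GC β δ,
      if g.1 0 = y then BE n GC GI α β δ h.1 g else 0) = WdE n GC GI α β δ h := by
  intro N
  induction N with
  | zero =>
      intro h hT y hy
      have h00 : h.1 0 = allSusc n := (absTime_eq_zero_iff h).mp hT
      have hall : ∀ t, h.1 t = allSusc n := fun t => absorbed_ge h h00 (Nat.zero_le t)
      have hBE : ∀ g : SamplePath n GC β δ,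
          BE n GC GI α β δ h.1 g = WE n GC β δ g := by
        intro g
        unfold BE WE
        apply Finset.prod_congr rfl
        intro t _
        rw [hall t, hall (t+1), sc_allSusc]
      have : (∑' g : SamplePath n GC β δ,
          if g.1 0 = y then BE n GC GI α β δ h.1 g else 0)
          = ∑' g : SamplePath n GC β δ, (if g.1 0 = y then WE n GC β δ g else 0) := by
        apply tsum_congr
        intro g
        rw [hBE g]
      rw [this, tsum_WE hβ hδ y]
      unfold WdE
      rw [hT]
      simp
  | succ N ih =>
      intro h hT y hy
      have h00 : h.1 0 ≠ allSusc n := by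
        intro h0
        rw [(absTime_eq_zero_iff h).mpr h0] at hT
        omega
      have hyne : y ≠ allSusc n := by
        intro h0
        subst h0
        exact h00 (le_allSusc hy)
      have hTsh : absTime n GC β δ (shiftPath h) = N := by
        have := absTime_shift h h00
        omega
      have key : (∑' g : SamplePath n GC β δ,
          if g.1 0 = y then BE n GC GI α β δ h.1 g else 0)
        = ∑' p : (Fin n → Bool) × SamplePath n GC β δ,
            (if p.2.1 0 = p.1 then
              ENNReal.ofReal (stateCouple n GC GI α β δ (h.1 0) y (h.1 1) p.1)
                * BE n GC GI α β δ (shiftSeq h.1) p.2 else 0) := by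
        apply tsum_eq_tsum_of_ne_zero_bij
          (i := fun p => gluePath y p.val.2 (by
            obtain ⟨⟨y', g'⟩, hp⟩ := p
            simp only [Function.mem_support] at hp
            obtain ⟨h1, hv⟩ := cond_of_ite_ne hp
            have hsc : stateCouple n GC GI α β δ (h.1 0) y (h.1 1) y' ≠ 0 := by
              intro h0
              rw [h0, ENNReal.ofReal_zero, zero_mul] at hv
              exact hv rfl
            have := sc_bench_y hn hGI hα hβ hδ hy hsc
            rw [h1]
            exact this))
        · rintro ⟨⟨y1, g1⟩, hp1⟩ ⟨⟨y2, g2⟩, hp2⟩ heq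
          simp only [Function.mem_support] at hp1 hp2
          obtain ⟨hc1, -⟩ := cond_of_ite_ne hp1
          obtain ⟨hc2, -⟩ := cond_of_ite_ne hp2
          simp only [Subtype.mk.injEq] at heq ⊢
          have hg : g1 = g2 := by
            have := congrArg shiftPath heq
            rwa [shift_glue, shift_glue] at this
          exact Prod.ext (by rw [← hc1, ← hc2, hg]) hg
        · intro g hne
          simp only [Function.mem_support] at hne
          obtain ⟨h1, hv⟩ := cond_of_ite_ne hne
          have hg0 : g.1 0 ≠ allSusc n := by rw [h1]; exact hyne
          have hdec := BE_shift (GI := GI) (α := α) h.1 g hg0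
          rw [h1] at hdec
          have hsc : ENNReal.ofReal
              (stateCouple n GC GI α β δ (h.1 0) y (h.1 1) (g.1 1)) ≠ 0 := by
            intro h0
            rw [hdec, h0, zero_mul] at hv
            exact hv rfl
          have hbe : BE n GC GI α β δ (shiftSeq h.1) (shiftPath g) ≠ 0 := by
            intro h0
            rw [hdec, h0, mul_zero] at hv
            exact hv rfl
          refine ⟨⟨⟨g.1 1, shiftPath g⟩, ?_⟩, ?_⟩
          · simp only [Function.mem_support]
            rw [if_pos (show (shiftPath g).1 0 = g.1 1 from rfl)]
            intro h0
            rcases mul_eq_zero.mp h0 with h0 | h0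
            · exact hsc h0
            · exact hbe h0
          · show gluePath y (shiftPath g) _ = g
            calc gluePath y (shiftPath g) _
                = gluePath (g.1 0) (shiftPath g) (g.2.1 0) := by congr 1; exact h1.symm
              _ = g := glue_shift g (g.2.1 0)
        · rintro ⟨⟨y', g'⟩, hp⟩
          simp only [Function.mem_support] at hp
          obtain ⟨h1, hv⟩ := cond_of_ite_ne hp
          rw [if_pos h1, if_pos (gluePath_zero y g' _), BE_glue h.1 y g' _ hyne, h1]
      rw [key, split_sum
        (fun y' => ENNReal.ofReal (stateCouple n GC GI α β δ (h.1 0) y (h.1 1) y'))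
        (fun g' => BE n GC GI α β δ (shiftSeq h.1) g')]
      have hstep : ∀ y' : Fin n → Bool,
          ENNReal.ofReal (stateCouple n GC GI α β δ (h.1 0) y (h.1 1) y')
            * (∑' g' : SamplePath n GC β δ,
                if g'.1 0 = y' then BE n GC GI α β δ (shiftSeq h.1) g' else 0)
          = ENNReal.ofReal (stateCouple n GC GI α β δ (h.1 0) y (h.1 1) y')
            * WdE n GC GI α β δ (shiftPath h) := by
        intro y'
        by_cases hle : (shiftPath h).1 0 ≤ y'
        · rw [← shiftSeq_path, ih (shiftPath h) hTsh y' hle]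
        · have : stateCouple n GC GI α β δ (h.1 0) y (h.1 1) y' = 0 :=
            sc_zero_of_not_le_out (h.1 0) y hle
          rw [this, ENNReal.ofReal_zero, zero_mul, zero_mul]
      rw [Finset.sum_congr rfl fun y' _ => hstep y']
      rw [← Finset.sum_mul]
      rw [← ENNReal.ofReal_sum_of_nonneg
        (fun y' _ => sc_nonneg hn hGI hα hβ hδ (h.1 0) y (h.1 1) y')]
      rw [sc_row hn hGI hα hβ hδ hy (h.1 1)]
      exact (WdE_shift h h00).symm

end withHyps

end

end SIS

open Finset Filter Topology
open scoped ENNReal NNReal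

namespace SIS

noncomputable section

variable {n : ℕ} {GC GI : SimpleGraph (Fin n)} [DecidableRel GC.Adj] [DecidableRel GI.Adj]
variable {α β δ : ℝ} {π : (Fin n → Bool) → ℝ}

section withHyps
variable (hn : 0 < n) (hGI : ∀ i, (GI.neighborFinset i).Nonempty)
  (hα : α ∈ Set.Icc (0:ℝ) 1) (hβ : β ∈ Set.Ioo (0:ℝ) 1) (hδ : δ ∈ Set.Ioo (0:ℝ) 1)
  (hπ : IsPMF π)

include hn hGI hα hβ hδ in
lemma muPath_nonneg (hπ0 : ∀ s, 0 ≤ π s) (g : SamplePath n GC β δ) :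
    0 ≤ muPath n GC β δ π g := by
  unfold muPath
  exact mul_nonneg (hπ0 _) (Finset.prod_nonneg fun t _ => Kbench_nonneg hβ hδ _ _)

include hn hGI hα hβ hδ in
lemma nuPath_nonneg (hπ0 : ∀ s, 0 ≤ π s) (g : SamplePath n GC β δ) :
    0 ≤ nuPath n GC GI α β δ π g := by
  unfold nuPath
  exact mul_nonneg (hπ0 _)
    (Finset.prod_nonneg fun t _ => Kdist_nonneg hn hGI hα hβ hδ _ _)

include hn hGI hα hβ hδ in
lemma PhiPath_nonneg (hπ0 : ∀ s, 0 ≤ π s) (p : SamplePath n GC β δ × SamplePath n GC β δ) :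
    0 ≤ PhiPath n GC GI α β δ π p := by
  unfold PhiPath
  apply mul_nonneg (mul_nonneg _ (hπ0 _))
  · exact Finset.prod_nonneg fun t _ => sc_nonneg hn hGI hα hβ hδ _ _ _ _
  · split_ifs <;> norm_num

include hn hGI hα hβ hδ in
lemma muE_eq (hπ0 : ∀ s, 0 ≤ π s) (g : SamplePath n GC β δ) :
    ENNReal.ofReal (muPath n GC β δ π g)
      = ENNReal.ofReal (π (g.1 0)) * WE n GC β δ g := by
  unfold muPath WE
  rw [ENNReal.ofReal_mul (hπ0 _),
    ENNReal.ofReal_prod_of_nonneg (fun t _ => Kbench_nonneg hβ hδ _ _)]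

include hn hGI hα hβ hδ in
lemma nuE_eq (hπ0 : ∀ s, 0 ≤ π s) (g : SamplePath n GC β δ) :
    ENNReal.ofReal (nuPath n GC GI α β δ π g)
      = ENNReal.ofReal (π (g.1 0)) * WdE n GC GI α β δ g := by
  unfold nuPath WdE
  rw [ENNReal.ofReal_mul (hπ0 _),
    ENNReal.ofReal_prod_of_nonneg (fun t _ => Kdist_nonneg hn hGI hα hβ hδ _ _)]

include hn hGI hα hβ hδ in
lemma PhiE_eq (hπ0 : ∀ s, 0 ≤ π s) (p : SamplePath n GC β δ × SamplePath n GC β δ) :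
    ENNReal.ofReal (PhiPath n GC GI α β δ π p)
      = if p.1.1 0 = p.2.1 0 then
          ENNReal.ofReal (π (p.1.1 0)) * BE n GC GI α β δ p.1.1 p.2 else 0 := by
  unfold PhiPath
  split_ifs with hc
  · rw [one_mul, ENNReal.ofReal_mul (hπ0 _)]
    congr 1
    unfold BE
    rw [ENNReal.ofReal_prod_of_nonneg (fun t _ => sc_nonneg hn hGI hα hβ hδ _ _ _ _)]
  · rw [zero_mul, zero_mul, ENNReal.ofReal_zero]

-- marginal over h (first coordinate): recovers the benchmark law
include hn hGI hα hβ hδ in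
lemma margA (hπ0 : ∀ s, 0 ≤ π s) (g : SamplePath n GC β δ) :
    (∑' h : SamplePath n GC β δ, ENNReal.ofReal (PhiPath n GC GI α β δ π (h, g)))
      = ENNReal.ofReal (π (g.1 0)) * WE n GC β δ g := by
  have h1 : ∀ h : SamplePath n GC β δ,
      ENNReal.ofReal (PhiPath n GC GI α β δ π (h, g))
        = ENNReal.ofReal (π (g.1 0)) *
            (if h.1 0 = g.1 0 then BE n GC GI α β δ h.1 g else 0) := by
    intro h
    rw [PhiE_eq hn hGI hα hβ hδ hπ0]
    by_cases hc : h.1 0 = g.1 0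
    · rw [if_pos hc, if_pos hc, hc]
    · rw [if_neg hc, if_neg hc, mul_zero]
  calc (∑' h : SamplePath n GC β δ, ENNReal.ofReal (PhiPath n GC GI α β δ π (h, g)))
      = ∑' h : SamplePath n GC β δ, ENNReal.ofReal (π (g.1 0)) *
          (if h.1 0 = g.1 0 then BE n GC GI α β δ h.1 g else 0) := tsum_congr h1
    _ = ENNReal.ofReal (π (g.1 0)) * ∑' h : SamplePath n GC β δ,
          (if h.1 0 = g.1 0 then BE n GC GI α β δ h.1 g else 0) := ENNReal.tsum_mul_left
    _ = ENNReal.ofReal (π (g.1 0)) * WE n GC β δ g := by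
        rw [claimA hn hGI hα hβ hδ (absTime n GC β δ g) g rfl (g.1 0) (le_refl _)]

-- marginal over g (second coordinate): recovers the distancing law
include hn hGI hα hβ hδ in
lemma margB (hπ0 : ∀ s, 0 ≤ π s) (h : SamplePath n GC β δ) :
    (∑' g : SamplePath n GC β δ, ENNReal.ofReal (PhiPath n GC GI α β δ π (h, g)))
      = ENNReal.ofReal (π (h.1 0)) * WdE n GC GI α β δ h := by
  have h1 : ∀ g : SamplePath n GC β δ,
      ENNReal.ofReal (PhiPath n GC GI α β δ π (h, g))
        = ENNReal.ofReal (π (h.1 0)) *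
            (if g.1 0 = h.1 0 then BE n GC GI α β δ h.1 g else 0) := by
    intro g
    rw [PhiE_eq hn hGI hα hβ hδ hπ0]
    by_cases hc : h.1 0 = g.1 0
    · rw [if_pos hc, if_pos hc.symm]
    · rw [if_neg hc, if_neg (fun hcc => hc hcc.symm), mul_zero]
  calc (∑' g : SamplePath n GC β δ, ENNReal.ofReal (PhiPath n GC GI α β δ π (h, g)))
      = ∑' g : SamplePath n GC β δ, ENNReal.ofReal (π (h.1 0)) *
          (if g.1 0 = h.1 0 then BE n GC GI α β δ h.1 g else 0) := tsum_congr h1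
    _ = ENNReal.ofReal (π (h.1 0)) * ∑' g : SamplePath n GC β δ,
          (if g.1 0 = h.1 0 then BE n GC GI α β δ h.1 g else 0) := ENNReal.tsum_mul_left
    _ = ENNReal.ofReal (π (h.1 0)) * WdE n GC GI α β δ h := by
        rw [claimB hn hGI hα hβ hδ (absTime n GC β δ h) h rfl (h.1 0) (le_refl _)]

-- support of the coupling: only ordered pairs
lemma Phi_support {h g : SamplePath n GC β δ}
    (hne : PhiPath n GC GI α β δ π (h, g) ≠ 0) : h ≤ g := by
  unfold PhiPath at hne
  have hne' : (if h.1 0 = g.1 0 then (1:ℝ) else 0) * π (h.1 0) *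
      ∏ t ∈ Finset.range (absTime n GC β δ g),
        stateCouple n GC GI α β δ (h.1 t) (g.1 t) (h.1 (t+1)) (g.1 (t+1)) ≠ 0 := hne
  have hc : h.1 0 = g.1 0 := by
    by_contra hcc
    rw [if_neg hcc, zero_mul, zero_mul] at hne'
    exact hne' rfl
  have hprodne : (∏ t ∈ Finset.range (absTime n GC β δ g),
      stateCouple n GC GI α β δ (h.1 t) (g.1 t) (h.1 (t+1)) (g.1 (t+1))) ≠ 0 :=
    fun hz => hne' (by rw [hz, mul_zero])
  have hprod := Finset.prod_ne_zero_iff.mp hprodne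
  set T := absTime n GC β δ g with hT
  have hle : ∀ t, t ≤ T → h.1 t ≤ g.1 t := by
    intro t
    induction t with
    | zero => intro _; exact le_of_eq hc
    | succ t iht =>
        intro hlt
        by_contra hnle
        have ht : t ∈ Finset.range T := Finset.mem_range.mpr (by omega)
        exact hprod t ht (sc_zero_of_not_le_out _ _ hnle)
  have hgT : g.1 T = allSusc n := absTime_mem g
  have hhT : h.1 T = allSusc n := le_allSusc (hgT ▸ hle T (le_refl T))
  show h.1 ≤ g.1
  intro t
  by_cases htT : t ≤ T
  · exact hle t htT
  · have hg : g.1 t = allSusc n := absorbed_ge g hgT (by omega)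
    have hh : h.1 t = allSusc n := absorbed_ge h hhT (by omega)
    rw [hg, hh]

-- total mass of the benchmark law is 1
include hn hGI hα hβ hδ hπ in
lemma total_mass :
    (∑' g : SamplePath n GC β δ, ENNReal.ofReal (muPath n GC β δ π g)) = 1 := by
  have hrw : ∀ g : SamplePath n GC β δ,
      ENNReal.ofReal (muPath n GC β δ π g)
        = ∑' s : Fin n → Bool,
            (if g.1 0 = s then ENNReal.ofReal (π s) * WE n GC β δ g else 0) := by
    intro g
    rw [muE_eq hn hGI hα hβ hδ hπ.1 g, tsum_fintype]
    rw [Finset.sum_ite_eq (Finset.univ) (g.1 0)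
      (fun s => ENNReal.ofReal (π s) * WE n GC β δ g)]
    simp
  calc (∑' g : SamplePath n GC β δ, ENNReal.ofReal (muPath n GC β δ π g))
      = ∑' (g : SamplePath n GC β δ) (s : Fin n → Bool),
          (if g.1 0 = s then ENNReal.ofReal (π s) * WE n GC β δ g else 0) := tsum_congr hrw
    _ = ∑' (s : Fin n → Bool) (g : SamplePath n GC β δ),
          (if g.1 0 = s then ENNReal.ofReal (π s) * WE n GC β δ g else 0) := ENNReal.tsum_comm
    _ = ∑' s : Fin n → Bool, ENNReal.ofReal (π s) := by
        apply tsum_congr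
        intro s
        have : ∀ g : SamplePath n GC β δ,
            (if g.1 0 = s then ENNReal.ofReal (π s) * WE n GC β δ g else 0)
              = ENNReal.ofReal (π s) * (if g.1 0 = s then WE n GC β δ g else 0) := by
          intro g; split_ifs <;> simp
        rw [tsum_congr this, ENNReal.tsum_mul_left, tsum_WE hβ hδ s, mul_one]
    _ = 1 := by
        rw [tsum_fintype, ← ENNReal.ofReal_sum_of_nonneg (fun s _ => hπ.1 s)]
        have hsum : ∑ s : Fin n → Bool, π s = 1 := (hasSum_fintype π).unique hπ.2
        rw [hsum, ENNReal.ofReal_one]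

-- real tsum from the ENNReal one
lemma real_tsum_eq {ι : Type*} (f : ι → ℝ) (hf : ∀ i, 0 ≤ f i) :
    ∑' i, f i = (∑' i, ENNReal.ofReal (f i)).toReal := by
  rw [ENNReal.tsum_toReal_eq (fun a => ENNReal.ofReal_ne_top)]
  exact tsum_congr fun i => (ENNReal.toReal_ofReal (hf i)).symm

end withHyps

end

end SIS

/-- for every pmf `π` on `Ω` and every upper set `I ⊆ Γ`,
`μ_π(I) − ν_π(I) = Φ_π(Iᶜ × I) ≥ 0`; in particular the benchmark sample-path law `μ_π`
stochastically dominates the distancing sample-path law `ν_π`. -/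
theorem benchmark_stochastically_dominates_distancing
    (n : ℕ) (hn : 0 < n) (GC GI : SimpleGraph (Fin n)) [DecidableRel GC.Adj] [DecidableRel GI.Adj]
    (hGI : ∀ i, (GI.neighborFinset i).Nonempty)
    (α β δ : ℝ) (hα : α ∈ Set.Icc (0:ℝ) 1) (hβ : β ∈ Set.Ioo (0:ℝ) 1)
    (hδ : δ ∈ Set.Ioo (0:ℝ) 1)
    (π : (Fin n → Bool) → ℝ) (hπ : IsPMF π) :
    ∀ I : Set (SamplePath n GC β δ), IsUpperSet I →
      ((∑' g : I, muPath n GC β δ π g.1) - (∑' g : I, nuPath n GC GI α β δ π g.1) =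
        ∑' hg : ((Iᶜ ×ˢ I : Set (SamplePath n GC β δ × SamplePath n GC β δ))),
          PhiPath n GC GI α β δ π hg.1) ∧
      (0 ≤ ∑' hg : ((Iᶜ ×ˢ I : Set (SamplePath n GC β δ × SamplePath n GC β δ))),
          PhiPath n GC GI α β δ π hg.1) ∧
      (∑' g : I, nuPath n GC GI α β δ π g.1) ≤ (∑' g : I, muPath n GC β δ π g.1) := by
  classical
  intro I hI
  have hπ0 := hπ.1
  set ΦE : SamplePath n GC β δ × SamplePath n GC β δ → ℝ≥0∞ :=
    fun p => ENNReal.ofReal (PhiPath n GC GI α β δ π p) with hΦE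
  set μE : SamplePath n GC β δ → ℝ≥0∞ :=
    fun g => ENNReal.ofReal (muPath n GC β δ π g) with hμE
  set νE : SamplePath n GC β δ → ℝ≥0∞ :=
    fun g => ENNReal.ofReal (nuPath n GC GI α β δ π g) with hνE
  set AE : ℝ≥0∞ := ∑' g : SamplePath n GC β δ, Set.indicator I μE g with hAE
  set BEn : ℝ≥0∞ := ∑' g : SamplePath n GC β δ, Set.indicator I νE g with hBEn
  set XE : ℝ≥0∞ := ∑' p : SamplePath n GC β δ × SamplePath n GC β δ,
    Set.indicator (Iᶜ ×ˢ I) ΦE p with hXE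
  -- μE as a marginal of ΦE
  have hmuMarg : ∀ g : SamplePath n GC β δ,
      μE g = ∑' h : SamplePath n GC β δ, ΦE (h, g) := by
    intro g
    show ENNReal.ofReal (muPath n GC β δ π g)
      = ∑' h : SamplePath n GC β δ, ENNReal.ofReal (PhiPath n GC GI α β δ π (h, g))
    rw [SIS.muE_eq hn hGI hα hβ hδ hπ0 g]
    exact (SIS.margA hn hGI hα hβ hδ hπ0 g).symm
  have hnuMarg : ∀ h : SamplePath n GC β δ,
      νE h = ∑' g : SamplePath n GC β δ, ΦE (h, g) := by
    intro h
    show ENNReal.ofReal (nuPath n GC GI α β δ π h)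
      = ∑' g : SamplePath n GC β δ, ENNReal.ofReal (PhiPath n GC GI α β δ π (h, g))
    rw [SIS.nuE_eq hn hGI hα hβ hδ hπ0 h]
    exact (SIS.margB hn hGI hα hβ hδ hπ0 h).symm
  -- AE as a sum over pairs
  have hAE2 : AE = ∑' p : SamplePath n GC β δ × SamplePath n GC β δ,
      (if p.2 ∈ I then ΦE p else 0) := by
    rw [hAE, ENNReal.tsum_prod', ENNReal.tsum_comm]
    apply tsum_congr
    intro g
    rw [Set.indicator_apply]
    by_cases hgI : g ∈ I
    · rw [if_pos hgI, hmuMarg g]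
      apply tsum_congr
      intro h
      rw [if_pos hgI]
    · rw [if_neg hgI]
      symm
      convert tsum_zero with h
      rw [if_neg hgI]
  -- split AE into the two rectangles
  have hsplit : AE = XE + (∑' p : SamplePath n GC β δ × SamplePath n GC β δ,
      Set.indicator (I ×ˢ I) ΦE p) := by
    rw [hAE2, hXE, ← ENNReal.tsum_add]
    apply tsum_congr
    intro p
    by_cases h1 : p.1 ∈ I <;> by_cases h2 : p.2 ∈ I <;>
      simp [Set.indicator_apply, Set.mem_prod, h1, h2]
  -- on the upper set, the second rectangle sums to the ν-mass of I
  have hII : (∑' p : SamplePath n GC β δ × SamplePath n GC β δ,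
      Set.indicator (I ×ˢ I) ΦE p) = BEn := by
    have hpoint : ∀ p : SamplePath n GC β δ × SamplePath n GC β δ,
        Set.indicator (I ×ˢ I) ΦE p = (if p.1 ∈ I then ΦE p else 0) := by
      intro p
      by_cases h1 : p.1 ∈ I
      · by_cases h2 : p.2 ∈ I
        · simp [Set.indicator_apply, Set.mem_prod, h1, h2]
        · have hzero : PhiPath n GC GI α β δ π p = 0 := by
            by_contra hne
            have hle : p.1 ≤ p.2 := SIS.Phi_support (h := p.1) (g := p.2)
              (by rw [Prod.mk.eta]; exact hne)
            exact h2 (hI hle h1)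
          simp [Set.indicator_apply, Set.mem_prod, h1, h2, hΦE, hzero]
      · simp [Set.indicator_apply, Set.mem_prod, h1]
    rw [tsum_congr hpoint, ENNReal.tsum_prod', hBEn]
    apply tsum_congr
    intro h
    rw [Set.indicator_apply]
    by_cases h1 : h ∈ I
    · rw [if_pos h1, hnuMarg h]
      apply tsum_congr
      intro g
      rw [if_pos h1]
    · rw [if_neg h1]
      convert tsum_zero with g
      rw [if_neg h1]
  have hkey : AE = XE + BEn := by rw [hsplit, hII]
  -- finiteness
  have hAE_le : AE ≤ 1 := by
    rw [hAE]
    calc ∑' g : SamplePath n GC β δ, Set.indicator I μE g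
        ≤ ∑' g : SamplePath n GC β δ, μE g :=
          ENNReal.tsum_le_tsum fun g => Set.indicator_le_self I μE g
      _ = 1 := SIS.total_mass hn hGI hα hβ hδ hπ
  have hAE_ne : AE ≠ ⊤ := by
    intro h
    rw [h] at hAE_le
    exact (by simp : ¬ (⊤ : ℝ≥0∞) ≤ 1) hAE_le
  have hXE_ne : XE ≠ ⊤ := by
    intro h
    apply hAE_ne
    rw [hkey, h]
    simp
  have hBE_ne : BEn ≠ ⊤ := by
    intro h
    apply hAE_ne
    rw [hkey, h]
    simp
  -- real sums equal toReal of the ENNReal sums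
  have hmu_real : (∑' g : I, muPath n GC β δ π g.1) = AE.toReal := by
    rw [tsum_subtype I (fun g => muPath n GC β δ π g)]
    rw [SIS.real_tsum_eq _ (fun g => by
      rw [Set.indicator_apply]
      split_ifs
      · exact SIS.muPath_nonneg hn hGI hα hβ hδ hπ0 g
      · exact le_refl 0)]
    congr 1
    rw [hAE]
    apply tsum_congr
    intro g
    rw [Set.indicator_apply, Set.indicator_apply]
    split_ifs
    · rfl
    · exact ENNReal.ofReal_zero
  have hnu_real : (∑' g : I, nuPath n GC GI α β δ π g.1) = BEn.toReal := by
    rw [tsum_subtype I (fun g => nuPath n GC GI α β δ π g)]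
    rw [SIS.real_tsum_eq _ (fun g => by
      rw [Set.indicator_apply]
      split_ifs
      · exact SIS.nuPath_nonneg hn hGI hα hβ hδ hπ0 g
      · exact le_refl 0)]
    congr 1
    rw [hBEn]
    apply tsum_congr
    intro g
    rw [Set.indicator_apply, Set.indicator_apply]
    split_ifs
    · rfl
    · exact ENNReal.ofReal_zero
  have hphi_real : (∑' hg : ((Iᶜ ×ˢ I : Set (SamplePath n GC β δ × SamplePath n GC β δ))),
      PhiPath n GC GI α β δ π hg.1) = XE.toReal := by
    rw [tsum_subtype (Iᶜ ×ˢ I) (fun p => PhiPath n GC GI α β δ π p)]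
    rw [SIS.real_tsum_eq _ (fun p => by
      rw [Set.indicator_apply]
      split_ifs
      · exact SIS.PhiPath_nonneg hn hGI hα hβ hδ hπ0 p
      · exact le_refl 0)]
    congr 1
    rw [hXE]
    apply tsum_congr
    intro p
    rw [Set.indicator_apply, Set.indicator_apply]
    split_ifs
    · rfl
    · exact ENNReal.ofReal_zero
  have htoReal : AE.toReal = XE.toReal + BEn.toReal := by
    rw [hkey, ENNReal.toReal_add hXE_ne hBE_ne]
  have hX_nonneg : (0:ℝ) ≤ XE.toReal := ENNReal.toReal_nonneg
  refine ⟨?_, ?_, ?_⟩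
  · rw [hmu_real, hnu_real, hphi_real]
    linarith
  · rw [hphi_real]
    exact hX_nonneg
  · rw [hmu_real, hnu_real]
    linarith
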